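/- arXiv:0905.2895 — 5 statements merged into one kernel-verified Lean document; each statement's English description precedes it below -/
import Mathlib

section
/- Let m ≥ 1 and let x₀, y₀ ∈ SU(2) satisfy [x₀,y₀] = −I. Then the subgroup K_2 of SU(2)^m generated by the center Z(SU(2))^m = {±I}^m together with the diagonal elements (x₀,...,x₀) and (y₀,...,y₀) is isomorphic as a group to (Z/2)^{m-1} × Q_8, where Q_8 is the quaternion group of order 8. -/
/-!
Common setup: the special unitary group `SU(p)`, the central product
`G_{m,p} = SU(p)^m / Δ(Z/p)`, the space `Hom(Z^n, G)` of commuting `n`-tuples,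
and the moduli space `Rep(Z^n, G) = Hom(Z^n, G)/G`.
-/

/-- The special unitary group `SU(p)`: the subgroup of the unitary group of `p × p`
complex matrices consisting of the matrices of determinant `1`. -/
def SUgrp (p : ℕ) : Subgroup (Matrix.unitaryGroup (Fin p) ℂ) :=
  MonoidHom.ker (Matrix.detMonoidHom.comp (Matrix.unitaryGroup (Fin p) ℂ).subtype)

/-- `SU p` as a topological group (topologized as a subspace of the matrices). -/
abbrev SU (p : ℕ) : Type := SUgrp p

/-- The underlying `p × p` complex matrix of an element of `SU p`. -/
noncomputable def SU.mat {p : ℕ} (x : SU p) : Matrix (Fin p) (Fin p) ℂ :=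
  ((x : Matrix.unitaryGroup (Fin p) ℂ) : Matrix (Fin p) (Fin p) ℂ)

/-- The diagonal embedding of a group into an `m`-fold product. -/
def diagHom (G : Type*) [Group G] (m : ℕ) : G →* (Fin m → G) where
  toFun g := fun _ => g
  map_one' := rfl
  map_mul' _ _ := rfl

/-- The diagonal central subgroup `Δ(Z/p) ⊆ SU(p)^m`, consisting of the constant tuples
`(z, ..., z)` with `z` in the center of `SU(p)`. -/
def DeltaZp (p m : ℕ) : Subgroup (Fin m → SU p) :=
  (Subgroup.center (SU p)).map (diagHom (SU p) m)

instance DeltaZp.normal (p m : ℕ) : (DeltaZp p m).Normal := by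
  constructor
  intro x hx g
  obtain ⟨z, hz, rfl⟩ := hx
  refine ⟨z, hz, ?_⟩
  funext i
  simp only [diagHom, MonoidHom.coe_mk, OneHom.coe_mk, Pi.mul_apply, Pi.inv_apply]
  rw [SetLike.mem_coe, Subgroup.mem_center_iff] at hz
  rw [hz (g i), mul_assoc, mul_inv_cancel, mul_one]

/-- The central product `G_{m,p} = SU(p)^m / Δ(Z/p)`, a topological group with the
quotient topology. -/
abbrev Gmp (p m : ℕ) : Type := (Fin m → SU p) ⧸ DeltaZp p m

/-- `Hom(Z^n, G)`: the space of commuting `n`-tuples in `G`, topologized as a subspace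
of `G^n`. -/
def commTuples (G : Type*) [Group G] (n : ℕ) : Set (Fin n → G) :=
  {f | ∀ i j, Commute (f i) (f j)}

/-- The trivial commuting tuple `(1, ..., 1)`. -/
def trivTuple (G : Type*) [Group G] (n : ℕ) : commTuples G n :=
  ⟨fun _ => 1, fun _ _ => Commute.one_left 1⟩

/-- The simultaneous-conjugation equivalence relation on the space of commuting
`n`-tuples in `G`. -/
def conjSetoid (G : Type*) [Group G] (n : ℕ) : Setoid (commTuples G n) where
  r x y := ∃ g : G, ∀ i, (y : Fin n → G) i = g * (x : Fin n → G) i * g⁻¹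
  iseqv := by
    constructor
    · exact fun x => ⟨1, fun i => by group⟩
    · rintro x y ⟨g, hg⟩
      exact ⟨g⁻¹, fun i => by rw [hg i]; group⟩
    · rintro x y z ⟨g, hg⟩ ⟨h, hh⟩
      exact ⟨h * g, fun i => by rw [hh i, hg i]; group⟩

/-- `Rep(Z^n, G) = Hom(Z^n, G)/G`: the quotient of the space of commuting `n`-tuples by
simultaneous conjugation, with the quotient topology. -/
abbrev RepSpace (G : Type*) [Group G] [TopologicalSpace G] (n : ℕ) : Type _ :=
  Quotient (conjSetoid G n)

/-- `N(n,m,p) = p^((m-1)(n-2))·(p^n − 1)·(p^(n-1) − 1)/(p² − 1) + 1` (the division is exact). -/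
def Ncomp (n m p : ℕ) : ℕ :=
  p ^ ((m - 1) * (n - 2)) * (p ^ n - 1) * (p ^ (n - 1) - 1) / (p ^ 2 - 1) + 1

open scoped commutatorElement

lemma SU.ext {p : ℕ} {x y : SU p} (h : SU.mat x = SU.mat y) : x = y :=
  Subtype.ext (Subtype.ext h)

lemma SU.mat_mul {p : ℕ} (x y : SU p) : SU.mat (x * y) = SU.mat x * SU.mat y := rfl

lemma SU.mat_one {p : ℕ} : SU.mat (1 : SU p) = 1 := rfl

lemma SU.mat_det {p : ℕ} (x : SU p) : (SU.mat x).det = 1 := x.2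

lemma SU.mat_inv_mul {p : ℕ} (x : SU p) : SU.mat x⁻¹ * SU.mat x = 1 := by
  rw [← SU.mat_mul, inv_mul_cancel, SU.mat_one]

-- the central element -1
lemma negOne_mem : (-1 : Matrix (Fin 2) (Fin 2) ℂ) ∈ Matrix.unitaryGroup (Fin 2) ℂ := by
  constructor <;> simp

noncomputable def cSU : SU 2 :=
  ⟨⟨-1, negOne_mem⟩, by
    simp only [SUgrp, MonoidHom.mem_ker, MonoidHom.comp_apply]
    show Matrix.det (-1 : Matrix (Fin 2) (Fin 2) ℂ) = 1
    simp [Matrix.det_fin_two]⟩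

lemma cSU_mat : SU.mat cSU = -1 := rfl

lemma cSU_sq : cSU * cSU = 1 := SU.ext (by rw [SU.mat_mul, cSU_mat, SU.mat_one]; rw [neg_mul_neg, one_mul])

lemma cSU_mem_center : cSU ∈ Subgroup.center (SU 2) := by
  rw [Subgroup.mem_center_iff]
  intro g
  apply SU.ext
  rw [SU.mat_mul, SU.mat_mul, cSU_mat, mul_neg_one, neg_one_mul]

lemma cSU_ne_one : cSU ≠ 1 := by
  intro h
  have := congrArg SU.mat h
  rw [cSU_mat, SU.mat_one] at this
  have := congrFun (congrFun this 0) 0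
  norm_num at this

open Complex in
lemma star_fin_two (a b c d : ℂ) :
    star !![a,b;c,d] = !![star a, star c; star b, star d] := by
  ext i j
  fin_cases i <;> fin_cases j <;> simp [Matrix.star_apply]

open Complex in
lemma dMat_mem : !![I, 0; 0, -I] ∈ Matrix.unitaryGroup (Fin 2) ℂ := by
  rw [Matrix.mem_unitaryGroup_iff, star_fin_two, Matrix.mul_fin_two]
  simp [Matrix.one_fin_two]

open Complex in
lemma wMat_mem : !![0, 1; -1, 0] ∈ Matrix.unitaryGroup (Fin 2) ℂ := by
  rw [Matrix.mem_unitaryGroup_iff, star_fin_two, Matrix.mul_fin_two]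
  simp [Matrix.one_fin_two]

open Complex in
noncomputable def dSU : SU 2 :=
  ⟨⟨!![I, 0; 0, -I], dMat_mem⟩, by
    simp only [SUgrp, MonoidHom.mem_ker, MonoidHom.comp_apply]
    show Matrix.det !![I, 0; 0, -I] = 1
    simp [Matrix.det_fin_two, I_mul_I]⟩

open Complex in
noncomputable def wSU : SU 2 :=
  ⟨⟨!![0, 1; -1, 0], wMat_mem⟩, by
    simp only [SUgrp, MonoidHom.mem_ker, MonoidHom.comp_apply]
    show Matrix.det !![(0:ℂ), 1; -1, 0] = 1
    simp [Matrix.det_fin_two]⟩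

open Complex in
lemma center_sub {g : SU 2} (hg : g ∈ Subgroup.center (SU 2)) : g = 1 ∨ g = cSU := by
  rw [Subgroup.mem_center_iff] at hg
  obtain ⟨a, b, c, d, hM⟩ : ∃ a b c d, SU.mat g = !![a,b;c,d] :=
    ⟨_, _, _, _, Matrix.eta_fin_two _⟩
  have h1 : SU.mat dSU * SU.mat g = SU.mat g * SU.mat dSU := by
    rw [← SU.mat_mul, ← SU.mat_mul, hg]
  have h2 : SU.mat wSU * SU.mat g = SU.mat g * SU.mat wSU := by
    rw [← SU.mat_mul, ← SU.mat_mul, hg]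
  have hd : SU.mat dSU = !![I, 0; 0, -I] := rfl
  have hw : SU.mat wSU = !![0, 1; -1, 0] := rfl
  rw [hd, hM] at h1
  rw [hw, hM] at h2
  simp only [Matrix.mul_fin_two] at h1 h2
  rw [← Matrix.ext_iff] at h1 h2
  have e1 := h1 0 1
  have e2 := h1 1 0
  simp at e1 e2
  have hb : b = 0 := by
    have : (2 * I) * b = 0 := by linear_combination e1
    rcases mul_eq_zero.mp this with h | h
    · exact absurd h (by simp [I_ne_zero])
    · exact h
  have hc : c = 0 := by
    have : (2 * I) * c = 0 := by linear_combination -e2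
    rcases mul_eq_zero.mp this with h | h
    · exact absurd h (by simp [I_ne_zero])
    · exact h
  have e4 : d = a := by
    have := h2 0 1
    simpa using this
  have hdet : a * d - b * c = 1 := by
    have := SU.mat_det g
    rw [hM, Matrix.det_fin_two_of] at this
    exact this
  have ha2 : (a - 1) * (a + 1) = 0 := by
    rw [hb, hc] at hdet; rw [e4] at hdet; linear_combination hdet
  rcases mul_eq_zero.mp ha2 with h | h
  · left
    apply SU.ext
    rw [hM, SU.mat_one, Matrix.one_fin_two]
    have ha : a = 1 := by linear_combination h
    rw [ha, hb, hc, e4, ha]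
  · right
    apply SU.ext
    rw [hM, cSU_mat]
    have ha : a = -1 := by linear_combination h
    rw [ha, hb, hc, e4, ha]
    ext i j
    fin_cases i <;> fin_cases j <;> simp

lemma sq_eq_c {g : SU 2} (htr : (SU.mat g).trace = 0) : g * g = cSU := by
  apply SU.ext
  rw [SU.mat_mul, cSU_mat]
  obtain ⟨a, b, c, d, hM⟩ : ∃ a b c d, SU.mat g = !![a,b;c,d] :=
    ⟨_, _, _, _, Matrix.eta_fin_two _⟩
  have hdet : a * d - b * c = 1 := by
    have := SU.mat_det g
    rwa [hM, Matrix.det_fin_two_of] at this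
  have htr' : a + d = 0 := by
    rwa [hM, Matrix.trace_fin_two_of] at htr
  rw [hM]
  simp only [Matrix.mul_fin_two]
  ext i j
  fin_cases i <;> fin_cases j <;>
    simp <;>
    first
      | linear_combination a * htr' - hdet
      | linear_combination b * htr'
      | linear_combination c * htr'
      | linear_combination d * htr' - hdet

section XY
variable {x₀ y₀ : SU 2} (hxy : SU.mat ⁅x₀, y₀⁆ = -1)

include hxy

lemma comm_eq_c : ⁅x₀, y₀⁆ = cSU := SU.ext (by rw [hxy, cSU_mat])

lemma hrel : x₀ * y₀ = cSU * (y₀ * x₀) := by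
  have h := comm_eq_c hxy
  rw [commutatorElement_def] at h
  rw [← h]
  group

lemma trace_x_zero : (SU.mat x₀).trace = 0 := by
  have h : x₀ = cSU * y₀ * x₀ * y₀⁻¹ := by
    have := hrel hxy
    rw [← mul_assoc] at this
    rw [← this]
    group
  have hm : SU.mat x₀ = ((-1 : Matrix (Fin 2) (Fin 2) ℂ) * SU.mat y₀ * SU.mat x₀) * SU.mat y₀⁻¹ := by
    conv_lhs => rw [h]
    rw [SU.mat_mul, SU.mat_mul, SU.mat_mul, cSU_mat]
  have : (SU.mat x₀).trace = -(SU.mat x₀).trace := by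
    conv_lhs => rw [hm]
    rw [neg_one_mul, neg_mul, neg_mul, Matrix.trace_neg, Matrix.trace_mul_comm,
      ← mul_assoc, SU.mat_inv_mul, one_mul]
  linear_combination this / 2

lemma trace_y_zero : (SU.mat y₀).trace = 0 := by
  have h : y₀ = cSU * x₀ * y₀ * x₀⁻¹ := by
    have h2 := hrel hxy
    have hcc : cSU * cSU = 1 := cSU_sq
    have h3 : cSU * (x₀ * y₀) = y₀ * x₀ := by
      rw [h2, ← mul_assoc, hcc, one_mul]
    calc y₀ = (y₀ * x₀) * x₀⁻¹ := by group
    _ = (cSU * (x₀ * y₀)) * x₀⁻¹ := by rw [h3]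
    _ = cSU * x₀ * y₀ * x₀⁻¹ := by group
  have hm : SU.mat y₀ = ((-1 : Matrix (Fin 2) (Fin 2) ℂ) * SU.mat x₀ * SU.mat y₀) * SU.mat x₀⁻¹ := by
    conv_lhs => rw [h]
    rw [SU.mat_mul, SU.mat_mul, SU.mat_mul, cSU_mat]
  have : (SU.mat y₀).trace = -(SU.mat y₀).trace := by
    conv_lhs => rw [hm]
    rw [neg_one_mul, neg_mul, neg_mul, Matrix.trace_neg, Matrix.trace_mul_comm,
      ← mul_assoc, SU.mat_inv_mul, one_mul]
  linear_combination this / 2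

lemma x_sq : x₀ * x₀ = cSU := sq_eq_c (trace_x_zero hxy)

lemma y_sq : y₀ * y₀ = cSU := sq_eq_c (trace_y_zero hxy)

lemma x_inv : x₀⁻¹ = cSU * x₀ := by
  symm
  apply eq_inv_of_mul_eq_one_left
  have hcen := Subgroup.mem_center_iff.mp cSU_mem_center
  rw [mul_assoc, x_sq hxy, cSU_sq]

lemma conj_rel : y₀ * x₀ = x₀⁻¹ * y₀ := by
  rw [x_inv hxy, mul_assoc, hrel hxy, ← mul_assoc, cSU_sq, one_mul]

lemma x_pow_four : x₀ ^ 4 = 1 := by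
  have : x₀ ^ 4 = (x₀ * x₀) * (x₀ * x₀) := by simp [pow_succ, mul_assoc]
  rw [this, x_sq hxy, cSU_sq]

end XY

lemma pow_mod_eq {G : Type*} [Group G] {g : G} {r : ℕ} (h : g ^ r = 1) (n : ℕ) :
    g ^ (n % r) = g ^ n := by
  conv_rhs => rw [← Nat.div_add_mod n r]
  rw [pow_add, pow_mul, h, one_pow, one_mul]

lemma zpow_eq_of_cast {G : Type*} [Group G] {g : G} (h4 : g ^ (4 : ℤ) = 1) {n m : ℤ}
    (h : (n : ZMod 4) = (m : ZMod 4)) : g ^ n = g ^ m := by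
  have hd := (ZMod.intCast_zmod_eq_zero_iff_dvd (n - m) 4).mp
    (by rw [Int.cast_sub, sub_eq_zero]; exact_mod_cast h)
  push_cast at hd
  obtain ⟨c, hc⟩ := hd
  have : n = m + 4 * c := by omega
  rw [this, zpow_add, zpow_mul, h4, one_zpow, mul_one]

lemma val_cast_zmod4 (i : ZMod 4) : (((i.val : ℤ)) : ZMod 4) = i := by
  have : ((i.val : ℤ) : ZMod 4) = ((i.val : ℕ) : ZMod 4) := by push_cast; ring
  rw [this]
  simp [ZMod.natCast_val, ZMod.cast_id]

open QuaternionGroup in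
noncomputable def rho (x₀ y₀ : SU 2) : QuaternionGroup 2 → SU 2
  | .a i => x₀ ^ (i.val : ℤ)
  | .xa i => y₀ * x₀ ^ (i.val : ℤ)

section XY2
variable {x₀ y₀ : SU 2} (hxy : SU.mat ⁅x₀, y₀⁆ = -1)

lemma rho_one : rho x₀ y₀ 1 = 1 := by
  show x₀ ^ (((0 : ZMod (2*2)).val : ℤ)) = 1
  norm_num

include hxy

lemma x_zpow_four : x₀ ^ (4 : ℤ) = 1 := by
  have := x_pow_four hxy
  rw [show (4:ℤ) = ((4:ℕ):ℤ) by norm_num, zpow_natCast, this]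

lemma y_mul_x_zpow (n : ℤ) : y₀ * x₀ ^ n = x₀ ^ (-n) * y₀ := by
  have h := conj_rel hxy
  have h2 : y₀ * x₀ * y₀⁻¹ = x₀⁻¹ := by rw [h]; group
  have h3 : (x₀⁻¹) ^ n = y₀ * x₀ ^ n * y₀⁻¹ := by rw [← h2, conj_zpow]
  rw [inv_zpow, ← zpow_neg] at h3
  rw [h3]
  group

lemma rho_mul (p q : QuaternionGroup 2) :
    rho x₀ y₀ (p * q) = rho x₀ y₀ p * rho x₀ y₀ q := by
  have h4 := x_zpow_four hxy
  obtain i | i := p <;> obtain j | j := q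
  · show x₀ ^ (((i+j).val : ℤ)) = x₀ ^ ((i.val : ℤ)) * x₀ ^ ((j.val : ℤ))
    rw [← zpow_add]
    refine zpow_eq_of_cast h4 ?_
    rw [val_cast_zmod4, Int.cast_add, val_cast_zmod4, val_cast_zmod4]
  · show y₀ * x₀ ^ (((j - i).val : ℤ)) = x₀ ^ ((i.val : ℤ)) * (y₀ * x₀ ^ ((j.val : ℤ)))
    have hswap : x₀ ^ ((i.val:ℤ)) * y₀ = y₀ * x₀ ^ (-(i.val:ℤ)) := by
      rw [y_mul_x_zpow hxy, neg_neg]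
    rw [← mul_assoc, hswap, mul_assoc, ← zpow_add]
    congr 1
    refine zpow_eq_of_cast h4 ?_
    rw [val_cast_zmod4]
    push_cast [ZMod.natCast_val, ZMod.cast_id]
    ring
  · show y₀ * x₀ ^ (((i + j).val : ℤ)) = (y₀ * x₀ ^ ((i.val : ℤ))) * x₀ ^ ((j.val : ℤ))
    rw [mul_assoc, ← zpow_add]
    congr 1
    refine zpow_eq_of_cast h4 ?_
    rw [val_cast_zmod4, Int.cast_add, val_cast_zmod4, val_cast_zmod4]
  · show x₀ ^ ((((2:ℕ) + j - i : ZMod (2*2)).val : ℤ))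
        = (y₀ * x₀ ^ ((i.val : ℤ))) * (y₀ * x₀ ^ ((j.val : ℤ)))
    have hx2 : x₀ ^ ((2:ℕ) : ℤ) = cSU := by
      rw [zpow_natCast, pow_two, x_sq hxy]
    symm
    calc (y₀ * x₀ ^ ((i.val : ℤ))) * (y₀ * x₀ ^ ((j.val : ℤ)))
        = y₀ * (x₀ ^ ((i.val : ℤ)) * y₀) * x₀ ^ ((j.val : ℤ)) := by group
      _ = y₀ * (y₀ * x₀ ^ (-(i.val : ℤ))) * x₀ ^ ((j.val : ℤ)) := by
          rw [y_mul_x_zpow hxy (-(i.val:ℤ)), neg_neg]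
      _ = (y₀ * y₀) * x₀ ^ (-(i.val : ℤ) + (j.val : ℤ)) := by rw [zpow_add]; group
      _ = x₀ ^ (((2:ℕ):ℤ)) * x₀ ^ (-(i.val : ℤ) + (j.val : ℤ)) := by rw [hx2, y_sq hxy]
      _ = x₀ ^ (((2:ℕ):ℤ) + (-(i.val : ℤ) + (j.val : ℤ))) := by rw [zpow_add x₀ (((2:ℕ):ℤ)), zpow_add]
      _ = x₀ ^ ((((2:ℕ) + j - i : ZMod (2*2)).val : ℤ)) := by
          refine (zpow_eq_of_cast h4 ?_).symm
          rw [val_cast_zmod4]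
          push_cast [ZMod.natCast_val, ZMod.cast_id]
          ring

lemma x_ne_one : x₀ ≠ 1 := by
  intro h
  apply cSU_ne_one
  rw [← x_sq hxy, h, one_mul]

open QuaternionGroup in
lemma rho_ker {q : QuaternionGroup 2} (hq : rho x₀ y₀ q = 1) : q = 1 := by
  have h4 := x_zpow_four hxy
  obtain i | i := q
  · have hv : i.val < 4 := i.val_lt
    have hiv : ((i.val : ZMod (2*2))) = i := by
      simp [ZMod.natCast_val, ZMod.cast_id]
    change x₀ ^ ((i.val : ℤ)) = 1 at hq
    interval_cases h : i.val
    · rw [show ((0:ℕ) : ZMod (2*2)) = 0 by norm_num] at hiv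
      rw [one_def, ← hiv]
    · exfalso
      apply x_ne_one hxy
      simpa using hq
    · exfalso
      apply cSU_ne_one
      rw [← x_sq hxy, ← pow_two, ← zpow_natCast]
      exact_mod_cast hq
    · exfalso
      apply x_ne_one hxy
      have : x₀ ^ (1:ℤ) = x₀ ^ (4:ℤ) * (x₀ ^ (3:ℤ))⁻¹ := by
        rw [← zpow_neg, ← zpow_add]; norm_num
      have hq3 : x₀ ^ (3:ℤ) = 1 := by exact_mod_cast hq
      rw [h4, hq3] at this
      simpa using this
  · exfalso
    change y₀ * x₀ ^ ((i.val : ℤ)) = 1 at hq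
    have hy : y₀ = (x₀ ^ ((i.val : ℤ)))⁻¹ := eq_inv_of_mul_eq_one_left hq
    have hcomm : x₀ * y₀ = y₀ * x₀ := by
      rw [hy]
      exact (((Commute.refl x₀).zpow_right ((i.val : ℤ))).inv_right).eq
    have := hrel hxy
    rw [hcomm] at this
    exact cSU_ne_one (right_eq_mul.mp this)

end XY2

noncomputable def chi (e : Multiplicative (ZMod 2)) : SU 2 :=
  cSU ^ (Multiplicative.toAdd e).val

lemma cSU_pow_two : cSU ^ 2 = 1 := by rw [pow_two, cSU_sq]

lemma chi_one : chi 1 = 1 := by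
  show cSU ^ (0 : ZMod 2).val = 1
  norm_num

lemma chi_mul (e f : Multiplicative (ZMod 2)) : chi (e * f) = chi e * chi f := by
  show cSU ^ (Multiplicative.toAdd e + Multiplicative.toAdd f).val = _
  rw [ZMod.val_add, pow_mod_eq cSU_pow_two, pow_add]
  rfl

lemma chi_central (e : Multiplicative (ZMod 2)) (g : SU 2) : g * chi e = chi e * g := by
  have := Subgroup.mem_center_iff.mp
    (pow_mem cSU_mem_center (Multiplicative.toAdd e).val) g
  exact this

lemma chi_eq_one {e : Multiplicative (ZMod 2)} (h : chi e = 1) : e = 1 := by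
  have hv : (Multiplicative.toAdd e).val < 2 := (Multiplicative.toAdd e).val_lt
  have hiv : (((Multiplicative.toAdd e).val : ZMod 2)) = Multiplicative.toAdd e := by
    simp [ZMod.natCast_val, ZMod.cast_id]
  interval_cases hval : (Multiplicative.toAdd e).val
  · rw [show ((0:ℕ) : ZMod 2) = 0 by norm_num] at hiv
    have : Multiplicative.toAdd e = 0 := hiv.symm
    simpa using congrArg Multiplicative.ofAdd this
  · exfalso
    apply cSU_ne_one
    rw [← h]
    show cSU = cSU ^ (Multiplicative.toAdd e).val
    rw [hval, pow_one]

lemma chi_ofAdd_one : chi (Multiplicative.ofAdd 1) = cSU := by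
  show cSU ^ (1 : ZMod 2).val = cSU
  rw [show ((1 : ZMod 2).val) = 1 from rfl, pow_one]

noncomputable def psi (x₀ y₀ : SU 2) (k : ℕ)
    (p : (Fin k → Multiplicative (ZMod 2)) × QuaternionGroup 2) : Fin (k+1) → SU 2 :=
  fun i => Fin.cases 1 (fun j => chi (p.1 j)) i * rho x₀ y₀ p.2

lemma psi_zero (x₀ y₀ : SU 2) (k : ℕ) (p) : psi x₀ y₀ k p 0 = rho x₀ y₀ p.2 := by
  simp [psi]

lemma psi_succ (x₀ y₀ : SU 2) (k : ℕ) (p) (j : Fin k) :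
    psi x₀ y₀ k p j.succ = chi (p.1 j) * rho x₀ y₀ p.2 := by
  simp [psi]

section XY3
variable {x₀ y₀ : SU 2} (hxy : SU.mat ⁅x₀, y₀⁆ = -1) (k : ℕ)

noncomputable def psiHom :
    ((Fin k → Multiplicative (ZMod 2)) × QuaternionGroup 2) →* (Fin (k+1) → SU 2) where
  toFun := psi x₀ y₀ k
  map_one' := by
    funext i
    induction i using Fin.cases with
    | zero => rw [psi_zero]; show rho x₀ y₀ 1 = 1; rw [rho_one]
    | succ j =>
      rw [psi_succ]
      show chi 1 * rho x₀ y₀ 1 = 1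
      rw [rho_one, chi_one, one_mul]
  map_mul' p q := by
    funext i
    show psi x₀ y₀ k (p * q) i = psi x₀ y₀ k p i * psi x₀ y₀ k q i
    induction i using Fin.cases with
    | zero =>
      rw [psi_zero, psi_zero, psi_zero]
      exact rho_mul hxy p.2 q.2
    | succ j =>
      rw [psi_succ, psi_succ, psi_succ]
      show chi (p.1 j * q.1 j) * rho x₀ y₀ (p.2 * q.2) = _
      rw [chi_mul, rho_mul hxy]
      have hcomm : Commute (chi (q.1 j)) (rho x₀ y₀ p.2) :=
        ((chi_central (q.1 j) (rho x₀ y₀ p.2))).symm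
      exact hcomm.mul_mul_mul_comm _ _

end XY3

section XY4
variable {x₀ y₀ : SU 2} (hxy : SU.mat ⁅x₀, y₀⁆ = -1) (k : ℕ)

lemma psi_inj : Function.Injective (psiHom hxy k) := by
  rw [injective_iff_map_eq_one]
  rintro ⟨ε, q⟩ h
  have h0 : psi x₀ y₀ k (ε, q) 0 = 1 := congrFun h 0
  rw [psi_zero] at h0
  have hq : q = 1 := rho_ker hxy h0
  have hε : ε = 1 := by
    funext j
    have hs : psi x₀ y₀ k (ε, q) j.succ = 1 := congrFun h j.succ
    rw [psi_succ] at hs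
    show ε j = 1
    exact chi_eq_one (by rwa [h0, mul_one] at hs)
  rw [hε, hq]
  rfl

open QuaternionGroup in
lemma psi_range : (psiHom hxy k).range = Subgroup.closure
    (({f | ∀ i, f i ∈ Subgroup.center (SU 2)} : Set (Fin (k+1) → SU 2))
      ∪ ({fun _ => x₀, fun _ => y₀} : Set (Fin (k+1) → SU 2))) := by
  set S : Set (Fin (k+1) → SU 2) :=
    ({f | ∀ i, f i ∈ Subgroup.center (SU 2)} : Set (Fin (k+1) → SU 2))
      ∪ ({fun _ => x₀, fun _ => y₀} : Set (Fin (k+1) → SU 2)) with hS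
  apply le_antisymm
  · rintro _ ⟨⟨ε, q⟩, rfl⟩
    have h1 : (fun i => Fin.cases (motive := fun _ => SU 2) 1 (fun j => chi (ε j)) i)
        ∈ Subgroup.closure S := by
      apply Subgroup.subset_closure
      left
      intro i
      induction i using Fin.cases with
      | zero => simpa using (Subgroup.center (SU 2)).one_mem
      | succ j =>
        simp only [Fin.cases_succ]
        exact pow_mem cSU_mem_center _
    have hdiag : ∀ g ∈ Subgroup.closure ({x₀, y₀} : Set (SU 2)),
        (fun _ : Fin (k+1) => g) ∈ Subgroup.closure S := by
      intro g hg
      induction hg using Subgroup.closure_induction with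
      | mem x hx =>
        apply Subgroup.subset_closure
        right
        rcases hx with rfl | rfl
        · exact Or.inl rfl
        · exact Or.inr rfl
      | one => exact (Subgroup.closure S).one_mem
      | mul a b ha hb iha ihb =>
        exact mul_mem iha ihb
      | inv a ha iha =>
        exact inv_mem iha
    have h2 : (fun _ : Fin (k+1) => rho x₀ y₀ q) ∈ Subgroup.closure S := by
      apply hdiag
      obtain i | i := q
      · show x₀ ^ ((i.val : ℤ)) ∈ Subgroup.closure ({x₀, y₀} : Set (SU 2))
        exact zpow_mem (Subgroup.subset_closure (Set.mem_insert _ _)) _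
      · show y₀ * x₀ ^ ((i.val : ℤ)) ∈ Subgroup.closure ({x₀, y₀} : Set (SU 2))
        exact mul_mem
          (Subgroup.subset_closure (Set.mem_insert_of_mem _ rfl))
          (zpow_mem (Subgroup.subset_closure (Set.mem_insert _ _)) _)
    exact mul_mem h1 h2
  · rw [Subgroup.closure_le]
    rintro f (hf | hf)
    · have hchoice : ∀ i, f i = 1 ∨ f i = cSU := fun i => center_sub (hf i)
      refine ⟨((fun j => if f j.succ = f 0 then 1 else Multiplicative.ofAdd 1),
               (if f 0 = 1 then 1 else QuaternionGroup.a 2)), ?_⟩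
      have hrho : rho x₀ y₀ (if f 0 = 1 then 1 else QuaternionGroup.a 2) = f 0 := by
        rcases hchoice 0 with h | h
        · rw [if_pos h, rho_one, h]
        · rw [if_neg (by rw [h]; exact cSU_ne_one)]
          show x₀ ^ (((2 : ZMod (2*2)).val : ℤ)) = f 0
          rw [show ((2 : ZMod (2*2)).val) = 2 by decide]
          rw [show ((2:ℕ):ℤ) = (2:ℤ) by norm_num]
          rw [show (2:ℤ) = ((2:ℕ):ℤ) by norm_num, zpow_natCast, pow_two, x_sq hxy, h]
      show psiHom hxy k _ = f
      funext i
      show psi x₀ y₀ k _ i = f i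
      induction i using Fin.cases with
      | zero => rw [psi_zero]; exact hrho
      | succ j =>
        rw [psi_succ]
        simp only []
        rw [hrho]
        by_cases hj : f j.succ = f 0
        · rw [if_pos hj, chi_one, one_mul, hj]
        · rw [if_neg hj, chi_ofAdd_one]
          rcases hchoice 0 with h0 | h0 <;> rcases hchoice j.succ with h1 | h1
          · exact absurd (h1.trans h0.symm) hj
          · rw [h0, h1, mul_one]
          · rw [h0, h1, cSU_sq]
          · exact absurd (h1.trans h0.symm) hj
    · rcases hf with rfl | rfl
      · refine ⟨(1, QuaternionGroup.a 1), ?_⟩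
        show psiHom hxy k _ = _
        funext i
        show psi x₀ y₀ k _ i = x₀
        have hr : rho x₀ y₀ (QuaternionGroup.a 1) = x₀ := by
          show x₀ ^ (((1 : ZMod (2*2)).val : ℤ)) = x₀
          rw [show ((1 : ZMod (2*2)).val) = 1 by decide]
          simp
        induction i using Fin.cases with
        | zero => rw [psi_zero]; exact hr
        | succ j =>
          rw [psi_succ, hr]
          show chi 1 * x₀ = x₀
          rw [chi_one, one_mul]
      · refine ⟨(1, QuaternionGroup.xa 0), ?_⟩
        show psiHom hxy k _ = _
        funext i
        show psi x₀ y₀ k _ i = y₀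
        have hr : rho x₀ y₀ (QuaternionGroup.xa 0) = y₀ := by
          show y₀ * x₀ ^ (((0 : ZMod (2*2)).val : ℤ)) = y₀
          rw [show ((0 : ZMod (2*2)).val) = 0 by decide]
          simp
        induction i using Fin.cases with
        | zero => rw [psi_zero]; exact hr
        | succ j =>
          rw [psi_succ, hr]
          show chi 1 * y₀ = y₀
          rw [chi_one, one_mul]

end XY4

/-- For `m ≥ 1` and `x₀, y₀ ∈ SU(2)` with `⁅x₀,y₀⁆ = -I`, the subgroup `K₂` of `SU(2)^m`
generated by the center `{±I}^m` together with the diagonal elements `(x₀,...,x₀)` and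
`(y₀,...,y₀)` is isomorphic to `(Z/2)^(m-1) × Q₈`. -/
theorem Ktwo_iso (m : ℕ) (hm : 1 ≤ m) (x₀ y₀ : SU 2) (hxy : SU.mat ⁅x₀, y₀⁆ = -1) :
    Nonempty
      ((Subgroup.closure
          (({f | ∀ i, f i ∈ Subgroup.center (SU 2)} : Set (Fin m → SU 2))
            ∪ ({fun _ => x₀, fun _ => y₀} : Set (Fin m → SU 2))))
        ≃* ((Fin (m - 1) → Multiplicative (ZMod 2)) × QuaternionGroup 2)) := by
  obtain ⟨k, rfl⟩ : ∃ k, m = k + 1 := ⟨m - 1, (Nat.succ_pred_eq_of_pos hm).symm⟩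
  exact ⟨(MulEquiv.subgroupCongr (psi_range hxy k).symm).trans
    (MonoidHom.ofInjective (psi_inj hxy k)).symm⟩
end

section
/- Let p be a prime and let c ∈ Z(SU(p)) with c ≠ 1. Then there exist elements x, y ∈ SU(p) with [x,y] = c. -/
namespace CommAux

lemma mem_SUgrp_iff {p : ℕ} (x : Matrix.unitaryGroup (Fin p) ℂ) :
    x ∈ SUgrp p ↔ Matrix.det (x : Matrix (Fin p) (Fin p) ℂ) = 1 := by
  simp [SUgrp, MonoidHom.mem_ker]

noncomputable def SUmk {p : ℕ} (M : Matrix (Fin p) (Fin p) ℂ)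
    (hU : M ∈ Matrix.unitaryGroup (Fin p) ℂ) (hdet : M.det = 1) : SU p :=
  ⟨⟨M, hU⟩, (mem_SUgrp_iff _).2 hdet⟩

@[simp] lemma SUmk_mat {p : ℕ} (M : Matrix (Fin p) (Fin p) ℂ) (hU hdet) :
    SU.mat (SUmk M hU hdet) = M := rfl

lemma mat_mul {p : ℕ} (x y : SU p) : SU.mat (x * y) = SU.mat x * SU.mat y := rfl

lemma mat_injective {p : ℕ} : Function.Injective (SU.mat (p := p)) := by
  intro x y h
  exact Subtype.ext (Subtype.ext h)

lemma det_mat {p : ℕ} (x : SU p) : (SU.mat x).det = 1 := (mem_SUgrp_iff _).1 x.2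

lemma unitary_diagonal {p : ℕ} (d : Fin p → ℂ)
    (h : ∀ i, d i * star (d i) = 1) :
    Matrix.diagonal d ∈ Matrix.unitaryGroup (Fin p) ℂ := by
  rw [Matrix.mem_unitaryGroup_iff, Matrix.star_eq_conjTranspose,
    Matrix.diagonal_conjTranspose, Matrix.diagonal_mul_diagonal, ← Matrix.diagonal_one]
  exact congrArg Matrix.diagonal (funext fun i => h i)

lemma unitary_perm {p : ℕ} (σ : Equiv.Perm (Fin p)) :
    σ.permMatrix ℂ ∈ Matrix.unitaryGroup (Fin p) ℂ := by
  rw [Matrix.mem_unitaryGroup_iff]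
  have hstar : star (σ.permMatrix ℂ) = (σ⁻¹).permMatrix ℂ := by
    rw [Matrix.star_eq_conjTranspose]
    ext i j
    rcases eq_or_ne (σ j) i with h | h
    · simp [Equiv.Perm.permMatrix, PEquiv.toMatrix_apply, Equiv.toPEquiv_apply,
        Matrix.conjTranspose_apply, Equiv.Perm.inv_def, ← h]
    · simp [Equiv.Perm.permMatrix, PEquiv.toMatrix_apply, Equiv.toPEquiv_apply,
        Matrix.conjTranspose_apply, Equiv.Perm.inv_def, h, Ne.symm h,
        Equiv.symm_apply_eq]
  rw [hstar]
  show σ.toPEquiv.toMatrix * _ = _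
  rw [PEquiv.toMatrix_toPEquiv_mul]
  ext i j
  simp [Equiv.Perm.permMatrix, PEquiv.toMatrix_apply, Equiv.toPEquiv_apply,
    Equiv.Perm.inv_def, Equiv.symm_apply_eq, Matrix.one_apply, eq_comm]

lemma unitary_smul {p : ℕ} {u : ℂ} (hu : u * star u = 1)
    {M : Matrix (Fin p) (Fin p) ℂ} (hM : M ∈ Matrix.unitaryGroup (Fin p) ℂ) :
    u • M ∈ Matrix.unitaryGroup (Fin p) ℂ := by
  rw [Matrix.mem_unitaryGroup_iff] at hM ⊢
  rw [star_smul, smul_mul_assoc, Matrix.mul_smul, hM, smul_smul, hu, one_smul]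

lemma unit_conj_of_pow_abs {u : ℂ} {k : ℕ} (hk : 0 < k) (h : ‖u‖ ^ k = 1) :
    u * star u = 1 := by
  have h0 : (0:ℝ) ≤ ‖u‖ := norm_nonneg u
  have habs : ‖u‖ = 1 := by
    rcases (pow_eq_one_iff_of_ne_zero hk.ne').1 h with h1 | ⟨h1, _⟩
    · exact h1
    · linarith
  have := Complex.mul_conj u
  rw [Complex.normSq_eq_norm_sq, habs] at this
  simpa using this

end CommAux

open scoped commutatorElement

/-- For a prime `p` and a nontrivial central element `c` of `SU(p)`, there exist
`x, y ∈ SU(p)` with `⁅x,y⁆ = c`. -/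
theorem exists_commutator_eq_central (p : ℕ) (hp : p.Prime)
    (c : SU p) (hc : c ∈ Subgroup.center (SU p)) (hc1 : c ≠ 1) :
    ∃ x y : SU p, ⁅x, y⁆ = c := by
  classical
  obtain ⟨n, rfl⟩ : ∃ n, p = n + 1 := ⟨p - 1, (Nat.succ_pred_eq_of_pos hp.pos).symm⟩
  have hn1 : 1 ≤ n := by have := hp.two_le; omega
  set P : Matrix (Fin (n+1)) (Fin (n+1)) ℂ := (finRotate (n+1)).permMatrix ℂ with hP
  -- the scalar δ fixing the determinant of the shift matrix
  obtain ⟨δ, hδ⟩ := IsAlgClosed.exists_pow_nat_eq ((-1 : ℂ) ^ n) (Nat.succ_pos n)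
  have hδabs : ‖δ‖ ^ (n+1) = 1 := by
    have := congrArg (‖·‖) hδ
    rwa [norm_pow, norm_pow, norm_neg, norm_one, one_pow] at this
  have hδu : δ * star δ = 1 := CommAux.unit_conj_of_pow_abs (Nat.succ_pos n) hδabs
  have hδ0 : δ ≠ 0 := by
    intro h; rw [h] at hδu; simp at hδu
  have hXU : δ • P ∈ Matrix.unitaryGroup (Fin (n+1)) ℂ :=
    CommAux.unitary_smul hδu (CommAux.unitary_perm _)
  have hXdet : (δ • P).det = 1 := by
    rw [Matrix.det_smul, Matrix.det_permutation, sign_finRotate, Fintype.card_fin, hδ]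
    push_cast
    rw [← mul_pow, neg_mul_neg, one_mul, one_pow]
  -- centrality at the matrix level
  have hcomm : ∀ g : SU (n+1), SU.mat g * SU.mat c = SU.mat c * SU.mat g := by
    intro g
    have h1 := (Subgroup.mem_center_iff.1 hc) g
    have h2 := congrArg SU.mat h1
    rwa [CommAux.mat_mul, CommAux.mat_mul] at h2
  set C : Matrix (Fin (n+1)) (Fin (n+1)) ℂ := SU.mat c with hCdef
  -- off-diagonal entries of C vanish
  have hoff : ∀ i j : Fin (n+1), i ≠ j → C i j = 0 := by
    intro i j hij
    set d : Fin (n+1) → ℂ := fun k => if k = i then Complex.I else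
      if k = j then -Complex.I else 1 with hd
    have hdstar : ∀ k, d k * star (d k) = 1 := by
      intro k
      by_cases h1 : k = i <;> by_cases h2 : k = j <;>
        simp [hd, h1, h2, hij, Ne.symm hij, Complex.star_def, Complex.conj_I]
    have hdet : (Matrix.diagonal d).det = 1 := by
      rw [Matrix.det_diagonal,
        ← Finset.mul_prod_erase _ _ (Finset.mem_univ i),
        ← Finset.mul_prod_erase _ _ (Finset.mem_erase.2 ⟨Ne.symm hij, Finset.mem_univ j⟩)]
      have h1 : ∀ k ∈ ((Finset.univ.erase i).erase j), d k = 1 := by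
        intro k hk
        obtain ⟨hkj, hki⟩ : k ≠ j ∧ k ≠ i := by
          simpa [Finset.mem_erase] using hk
        simp [hd, hki, hkj]
      rw [Finset.prod_congr rfl h1, Finset.prod_const_one, mul_one]
      simp [hd, hij, Ne.symm hij]
    have key := hcomm (CommAux.SUmk _ (CommAux.unitary_diagonal d hdstar) hdet)
    rw [CommAux.SUmk_mat] at key
    have h3 := congrFun (congrFun key i) j
    rw [Matrix.diagonal_mul, Matrix.mul_diagonal] at h3
    have hdi : d i = Complex.I := by simp [hd]
    have hdj : d j = -Complex.I := by simp [hd, Ne.symm hij]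
    rw [hdi, hdj] at h3
    -- h3 : I * C i j = C i j * -I
    have h4 : C i j * (2 * Complex.I) = 0 := by linear_combination h3
    rcases mul_eq_zero.1 h4 with h | h
    · exact h
    · exfalso; simp [Complex.I_ne_zero] at h
  -- the diagonal of C is constant
  have hXc := hcomm (CommAux.SUmk _ hXU hXdet)
  rw [CommAux.SUmk_mat] at hXc
  have hPC : P * C = C * P := by
    rw [Matrix.smul_mul, Matrix.mul_smul] at hXc
    exact smul_right_injective _ hδ0 hXc
  have hdiagstep : ∀ a : Fin (n+1), C (a+1) (a+1) = C a a := by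
    intro a
    have h1 : (finRotate (n+1)).toPEquiv.toMatrix * C = C * (finRotate (n+1)).toPEquiv.toMatrix := hPC
    rw [PEquiv.toMatrix_toPEquiv_mul, PEquiv.mul_toMatrix_toPEquiv] at h1
    have h2 := congrFun (congrFun h1 a) (a+1)
    rw [Matrix.submatrix_apply, Matrix.submatrix_apply, id_eq, id_eq, finRotate_succ_apply] at h2
    have h5 : (finRotate (n+1)).symm (a+1) = a := by
      rw [Equiv.symm_apply_eq, finRotate_succ_apply]
    rwa [h5] at h2
  set ζ : ℂ := C 0 0 with hζdef
  have hdiag : ∀ a : Fin (n+1), C a a = ζ := by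
    open Fin.NatCast Fin.CommRing in
    have hnat : ∀ m : ℕ, C (m : Fin (n+1)) (m : Fin (n+1)) = ζ := by
      intro m
      induction m with
      | zero => simp [hζdef]
      | succ k ih =>
          have hcast : ((k+1 : ℕ) : Fin (n+1)) = (k : Fin (n+1)) + 1 := by push_cast; ring
          rw [hcast, hdiagstep, ih]
    intro a
    have := hnat a.val
    rwa [Fin.cast_val_eq_self] at this
  have hC : C = ζ • (1 : Matrix (Fin (n+1)) (Fin (n+1)) ℂ) := by
    ext i j
    rcases eq_or_ne i j with rfl | h
    · simp [Matrix.one_apply, hdiag i]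
    · simp [Matrix.one_apply, h, hoff i j h]
  have hζpow : ζ ^ (n+1) = 1 := by
    have hdet := CommAux.det_mat c
    rw [← hCdef, hC, Matrix.det_smul, Matrix.det_one, mul_one, Fintype.card_fin] at hdet
    exact hdet
  have hζ1 : ζ ≠ 1 := by
    intro h
    apply hc1
    apply CommAux.mat_injective
    show C = SU.mat 1
    rw [hC, h, one_smul]
    rfl
  have hζabs : ‖ζ‖ ^ (n+1) = 1 := by
    have := congrArg (‖·‖) hζpow
    rwa [norm_pow, norm_one] at this
  have habsζ : ‖ζ‖ = 1 := by
    rcases (pow_eq_one_iff_of_ne_zero (Nat.succ_ne_zero n)).1 hζabs with h1 | ⟨h1, -⟩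
    · exact h1
    · have := norm_nonneg ζ; linarith
  have hζu : ζ * star ζ = 1 := CommAux.unit_conj_of_pow_abs (Nat.succ_pos n) hζabs
  -- the diagonal matrix D
  set D : Matrix (Fin (n+1)) (Fin (n+1)) ℂ :=
    Matrix.diagonal (fun k : Fin (n+1) => ζ ^ (k : ℕ)) with hD
  have hDstar : ∀ k : Fin (n+1), ζ ^ (k:ℕ) * star (ζ ^ (k:ℕ)) = 1 := by
    intro k
    rw [star_pow, ← mul_pow, hζu, one_pow]
  have hDU : D ∈ Matrix.unitaryGroup (Fin (n+1)) ℂ :=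
    CommAux.unitary_diagonal _ hDstar
  have habsdetD : ‖D.det‖ = 1 := by
    rw [hD, Matrix.det_diagonal, norm_prod]
    simp [norm_pow, habsζ]
  have hdetD0 : D.det ≠ 0 := by
    intro h; rw [h] at habsdetD; simp at habsdetD
  obtain ⟨ε, hε⟩ := IsAlgClosed.exists_pow_nat_eq (D.det)⁻¹ (Nat.succ_pos n)
  have hεabs : ‖ε‖ ^ (n+1) = 1 := by
    have := congrArg (‖·‖) hε
    rwa [norm_pow, norm_inv, habsdetD, inv_one] at this
  have hεu : ε * star ε = 1 := CommAux.unit_conj_of_pow_abs (Nat.succ_pos n) hεabs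
  have hYU : ε • D ∈ Matrix.unitaryGroup (Fin (n+1)) ℂ := CommAux.unitary_smul hεu hDU
  have hYdet : (ε • D).det = 1 := by
    rw [Matrix.det_smul, Fintype.card_fin, hε, inv_mul_cancel₀ hdetD0]
  -- the key identity  P * D = ζ • (D * P)
  have hkey : P * D = ζ • (D * P) := by
    ext a b
    rw [hD, Matrix.smul_apply, Matrix.mul_diagonal, Matrix.diagonal_mul]
    rcases eq_or_ne b (a + 1) with rfl | h
    · have hP1 : P a (a+1) = 1 := by
        simp [hP, Equiv.Perm.permMatrix, PEquiv.toMatrix_apply, Equiv.toPEquiv_apply]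
      rw [hP1, one_mul, mul_one, smul_eq_mul]
      have hval : ((a + 1 : Fin (n+1)) : ℕ) = (a.val + 1) % (n+1) := by
        have h1 : ((1 : Fin (n+1)) : ℕ) = 1 := by
          rw [Fin.val_one']
          exact Nat.mod_eq_of_lt (by omega)
        rw [Fin.val_add, h1]
      rw [hval, ← pow_eq_pow_mod _ hζpow, pow_succ, mul_comm]
    · have hP0 : P a b = 0 := by
        simp only [hP, Equiv.Perm.permMatrix, PEquiv.toMatrix_apply, Equiv.toPEquiv_apply,
          Option.mem_def, Option.some.injEq, finRotate_succ_apply]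
        rw [if_neg]
        intro hh; exact h hh.symm
      rw [hP0, zero_mul, mul_zero, smul_zero]
  -- assemble
  refine ⟨CommAux.SUmk _ hXU hXdet, CommAux.SUmk _ hYU hYdet, ?_⟩
  set X := CommAux.SUmk _ hXU hXdet
  set Y := CommAux.SUmk _ hYU hYdet
  have hmat : SU.mat (X * Y) = SU.mat (c * (Y * X)) := by
    rw [CommAux.mat_mul, CommAux.mat_mul, CommAux.mat_mul]
    show (δ • P) * (ε • D) = C * ((ε • D) * (δ • P))
    rw [hC]
    simp only [smul_mul_assoc, mul_smul_comm, one_mul, smul_smul]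
    rw [hkey]
    simp only [smul_smul]
    congr 1
    ring
  have hXY : X * Y = c * (Y * X) := CommAux.mat_injective hmat
  rw [commutatorElement_def, hXY]
  group
end

section
/- Let p be a prime and let c ∈ Z(SU(p)) with c ≠ 1. If (x,y) and (x',y') are pairs of elements of SU(p) with [x,y] = [x',y'] = c, then the pairs are conjugate: there exists g ∈ SU(p) with x' = g x g⁻¹ and y' = g y g⁻¹. -/
open scoped commutatorElement

namespace CPC

open Matrix Complex

variable {p : ℕ}

lemma SU.mat_mul (a b : SU p) : (a * b).mat = a.mat * b.mat := rfl

lemma SU.star_mat_mul (a : SU p) : star a.mat * a.mat = 1 := a.val.2.1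

lemma SU.mat_det (a : SU p) : a.mat.det = 1 := by
  have h := MonoidHom.mem_ker.mp a.2
  simpa [SU.mat] using h

lemma SU.ext' {a b : SU p} (h : a.mat = b.mat) : a = b :=
  Subtype.ext (Subtype.ext h)

/-- build an element of SU p from a matrix -/
def SU.mk' (M : Matrix (Fin p) (Fin p) ℂ) (h1 : star M * M = 1) (h2 : M.det = 1) : SU p :=
  ⟨⟨M, Matrix.mem_unitaryGroup_iff'.2 h1⟩, by simpa [SUgrp, MonoidHom.mem_ker] using h2⟩

lemma SU.mk'_mat (M : Matrix (Fin p) (Fin p) ℂ) (h1 : star M * M = 1) (h2 : M.det = 1) :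
    (SU.mk' M h1 h2).mat = M := rfl

-- test matrices
section tests
variable (i j : Fin p) (hij : i ≠ j)

noncomputable def Dmat (i j : Fin p) : Matrix (Fin p) (Fin p) ℂ :=
  Matrix.diagonal (fun k => if k = i then Complex.I else if k = j then -Complex.I else 1)

lemma Dmat_unitary (hij : i ≠ j) : star (Dmat i j) * (Dmat i j) = 1 := by
  rw [Dmat]
  rw [show (star (Matrix.diagonal fun k => if k = i then Complex.I else if k = j then -Complex.I else 1) : Matrix (Fin p) (Fin p) ℂ) = (Matrix.diagonal fun k => if k = i then Complex.I else if k = j then -Complex.I else 1)ᴴ from rfl]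
  rw [Matrix.diagonal_conjTranspose, Matrix.diagonal_mul_diagonal]
  refine Matrix.ext fun a b => ?_
  rcases eq_or_ne a b with rfl | hab
  · rw [Matrix.diagonal_apply_eq, Matrix.one_apply_eq]
    rcases eq_or_ne a i with rfl | hki
    · simp [Complex.conj_I]
    · rcases eq_or_ne a j with rfl | hkj
      · simp [hij.symm, Complex.conj_I]
      · simp [hki, hkj]
  · rw [Matrix.diagonal_apply_ne _ hab, Matrix.one_apply_ne hab]

lemma Dmat_det (hij : i ≠ j) : (Dmat i j).det = 1 := by
  rw [Dmat, Matrix.det_diagonal]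
  rw [← Finset.mul_prod_erase Finset.univ _ (Finset.mem_univ i)]
  rw [← Finset.mul_prod_erase _ _ (Finset.mem_erase.2 ⟨hij.symm, Finset.mem_univ j⟩)]
  rw [Finset.prod_eq_one ?h]
  · simp [hij.symm, Complex.I_mul_I]
  · intro k hk
    simp only [Finset.mem_erase] at hk
    simp [hk.1, hk.2.1]

end tests

end CPC

namespace CPC
open Matrix Complex
variable {p : ℕ}

noncomputable def Rmat (i j : Fin p) : Matrix (Fin p) (Fin p) ℂ :=
  (Equiv.swap i j).permMatrix ℂ * Matrix.diagonal (fun k => if k = i then -1 else 1)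

section R
variable (i j : Fin p)

lemma swap_toMatrix_apply (x y : Fin p) : (Equiv.swap i j).toPEquiv.toMatrix x y =
    (1 : Matrix (Fin p) (Fin p) ℂ) (Equiv.swap i j x) y := by
  rw [PEquiv.toMatrix_toPEquiv_apply, Pi.single_apply, Matrix.one_apply]
  exact if_congr eq_comm rfl rfl

lemma Pmat_star : star ((Equiv.swap i j).permMatrix ℂ) = (Equiv.swap i j).permMatrix ℂ := by
  refine Matrix.ext fun a b => ?_
  show ((Equiv.swap i j).permMatrix ℂ)ᴴ a b = _
  simp only [Equiv.Perm.permMatrix]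
  rw [Matrix.conjTranspose_apply, swap_toMatrix_apply,
    swap_toMatrix_apply]
  rcases eq_or_ne (Equiv.swap i j b) a with h | h
  · have h2 : Equiv.swap i j a = b := by rw [← h, Equiv.swap_apply_self]
    rw [h, h2, Matrix.one_apply_eq, Matrix.one_apply_eq]
    exact star_one _
  · have h2 : Equiv.swap i j a ≠ b := by
      intro hh; exact h (by rw [← hh, Equiv.swap_apply_self])
    rw [Matrix.one_apply_ne h, Matrix.one_apply_ne h2]
    exact star_zero _

lemma Pmat_mul_self : (Equiv.swap i j).permMatrix ℂ * (Equiv.swap i j).permMatrix ℂ = 1 := by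
  simp only [Equiv.Perm.permMatrix]
  rw [PEquiv.toMatrix_toPEquiv_mul]
  refine Matrix.ext fun a b => ?_
  rw [Matrix.submatrix_apply, swap_toMatrix_apply, Equiv.swap_apply_self, id]

lemma Dsign_star : star (Matrix.diagonal (fun k : Fin p => if k = i then (-1 : ℂ) else 1)) =
    Matrix.diagonal (fun k : Fin p => if k = i then (-1 : ℂ) else 1) := by
  refine Matrix.ext fun a b => ?_
  show (Matrix.diagonal _)ᴴ a b = _
  rw [Matrix.conjTranspose_apply]
  rcases eq_or_ne a b with rfl | hab
  · simp [apply_ite (star : ℂ → ℂ)]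
  · rw [Matrix.diagonal_apply_ne _ (Ne.symm hab), Matrix.diagonal_apply_ne _ hab]
    exact star_zero _

lemma Dsign_mul_self : Matrix.diagonal (fun k : Fin p => if k = i then (-1 : ℂ) else 1) *
    Matrix.diagonal (fun k : Fin p => if k = i then (-1 : ℂ) else 1) = 1 := by
  rw [Matrix.diagonal_mul_diagonal]
  refine Matrix.ext fun a b => ?_
  rcases eq_or_ne a b with rfl | hab
  · rw [Matrix.diagonal_apply_eq, Matrix.one_apply_eq]
    rcases eq_or_ne a i with rfl | h
    · simp
    · simp [h]
  · rw [Matrix.diagonal_apply_ne _ hab, Matrix.one_apply_ne hab]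

lemma Rmat_unitary : star (Rmat i j) * Rmat i j = 1 := by
  rw [Rmat, Matrix.star_mul, Dsign_star, Pmat_star, Matrix.mul_assoc,
    ← Matrix.mul_assoc ((Equiv.swap i j).permMatrix ℂ), Pmat_mul_self, Matrix.one_mul,
    Dsign_mul_self]

lemma Rmat_det (hij : i ≠ j) : (Rmat i j).det = 1 := by
  rw [Rmat, Matrix.det_mul, Matrix.det_permutation, Matrix.det_diagonal,
    Equiv.Perm.sign_swap hij]
  rw [Finset.prod_eq_single i (fun k _ hk => if_neg hk) (fun h => absurd (Finset.mem_univ i) h)]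
  simp

end R

lemma offdiag_zero {C : Matrix (Fin p) (Fin p) ℂ} {i j : Fin p} (hij : i ≠ j)
    (h : C * Dmat i j = Dmat i j * C) : C i j = 0 := by
  have h1 : C i j * (-Complex.I) = Complex.I * C i j := by
    have := congrFun (congrFun h i) j
    simpa [Dmat, Matrix.mul_diagonal, Matrix.diagonal_mul, Ne.symm hij] using this
  have h2 : (2 * Complex.I) * C i j = 0 := by linear_combination -h1
  rcases mul_eq_zero.mp h2 with h3 | h3
  · exact absurd h3 (by simp [Complex.ext_iff])
  · exact h3

lemma diag_eq {C : Matrix (Fin p) (Fin p) ℂ} {i j : Fin p} (hij : i ≠ j)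
    (h : C * Rmat i j = Rmat i j * C) : C i i = C j j := by
  have hL : (C * Rmat i j) i j = C i i := by
    rw [Rmat, ← Matrix.mul_assoc, Matrix.mul_diagonal, show (Equiv.swap i j).permMatrix ℂ = (Equiv.swap i j).toPEquiv.toMatrix from rfl, PEquiv.mul_toMatrix_toPEquiv,
      Matrix.submatrix_apply, if_neg (Ne.symm hij), mul_one, id, Equiv.symm_swap,
      Equiv.swap_apply_right]
  have hR : (Rmat i j * C) i j = C j j := by
    rw [Rmat, Matrix.mul_assoc, show (Equiv.swap i j).permMatrix ℂ = (Equiv.swap i j).toPEquiv.toMatrix from rfl, PEquiv.toMatrix_toPEquiv_mul, Matrix.submatrix_apply,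
      Equiv.swap_apply_left, id, Matrix.diagonal_mul, if_neg (Ne.symm hij), one_mul]
  rw [← hL, h, hR]

lemma center_scalar (hp : p.Prime) {c : SU p} (hc : c ∈ Subgroup.center (SU p)) :
    ∃ ζ : ℂ, c.mat = ζ • (1 : Matrix (Fin p) (Fin p) ℂ) ∧ ζ ^ p = 1 := by
  have hcomm : ∀ u : SU p, c.mat * u.mat = u.mat * c.mat := by
    intro u
    have h := Subgroup.mem_center_iff.mp hc u
    have := congrArg SU.mat h
    rw [SU.mat_mul, SU.mat_mul] at this
    exact this.symm
  have hoff : ∀ i j : Fin p, i ≠ j → c.mat i j = 0 := by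
    intro i j hij
    exact offdiag_zero hij (hcomm (SU.mk' (Dmat i j) (Dmat_unitary i j hij) (Dmat_det i j hij)))
  have hdiag : ∀ i j : Fin p, c.mat i i = c.mat j j := by
    intro i j
    rcases eq_or_ne i j with rfl | hij
    · rfl
    · exact diag_eq hij (hcomm (SU.mk' (Rmat i j) (Rmat_unitary i j) (Rmat_det i j hij)))
  have hp0 : 0 < p := hp.pos
  set i0 : Fin p := ⟨0, hp0⟩
  have hC : c.mat = c.mat i0 i0 • (1 : Matrix (Fin p) (Fin p) ℂ) := by
    refine Matrix.ext fun a b => ?_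
    rcases eq_or_ne a b with rfl | hab
    · rw [Matrix.smul_apply, Matrix.one_apply_eq, smul_eq_mul, mul_one]
      exact hdiag a i0
    · rw [Matrix.smul_apply, Matrix.one_apply_ne hab, smul_eq_mul, mul_zero]
      exact hoff a b hab
  refine ⟨c.mat i0 i0, hC, ?_⟩
  have hdet := SU.mat_det c
  rw [hC, Matrix.det_smul, Matrix.det_one, mul_one, Fintype.card_fin] at hdet
  exact hdet

end CPC

namespace CPC
open Matrix
variable {p : ℕ}

lemma mat_ext_basis {M N : Matrix (Fin p) (Fin p) ℂ} (b : Module.Basis (Fin p) ℂ (Fin p → ℂ))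
    (h : ∀ i, M.mulVec (b i) = N.mulVec (b i)) : M = N := by
  have h2 : Matrix.toLin' M = Matrix.toLin' N :=
    b.ext fun i => by rw [Matrix.toLin'_apply, Matrix.toLin'_apply]; exact h i
  exact Matrix.toLin'.injective h2

lemma core (hp : 0 < p) {ζ : ℂ} (hprim : IsPrimitiveRoot ζ p)
    {A B : Matrix (Fin p) (Fin p) ℂ} (hA : IsUnit A)
    (hcomm : A * B = ζ • (B * A))
    {v : Fin p → ℂ} (hv : v ≠ 0) {μ : ℂ} (hμ : μ ≠ 0)
    (heig : B.mulVec v = μ • v) :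
    ∃ b : Module.Basis (Fin p) ℂ (Fin p → ℂ),
      (∀ i : Fin p, b i = (A ^ (i : ℕ)).mulVec v) ∧
      (∀ i : Fin p, B.mulVec (b i) = (ζ⁻¹ ^ (i : ℕ) * μ) • b i) ∧
      B ^ p = (μ ^ p) • (1 : Matrix (Fin p) (Fin p) ℂ) ∧
      B.det = μ ^ p * ζ⁻¹ ^ (∑ i ∈ Finset.range p, i) := by
  haveI : NeZero p := ⟨hp.ne'⟩
  have hζ0 : ζ ≠ 0 := fun h => by
    have := hprim.pow_eq_one
    rw [h, zero_pow hp.ne'] at this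
    exact zero_ne_one this
  have hBA : B * A = ζ⁻¹ • (A * B) := by
    rw [hcomm, smul_smul, inv_mul_cancel₀ hζ0, one_smul]
  set w : ℕ → (Fin p → ℂ) := fun k => (A ^ k).mulVec v with hw
  have hwB : ∀ k : ℕ, B.mulVec (w k) = (ζ⁻¹ ^ k * μ) • w k := by
    intro k
    induction k with
    | zero => simpa [hw] using heig
    | succ k ih =>
      have hwk : w (k + 1) = A.mulVec (w k) := by
        show (A ^ (k+1)).mulVec v = A.mulVec ((A ^ k).mulVec v)
        rw [Matrix.mulVec_mulVec, pow_succ']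
      have hswap : ∀ u : Fin p → ℂ, B.mulVec (A.mulVec u) = ζ⁻¹ • A.mulVec (B.mulVec u) := by
        intro u
        rw [Matrix.mulVec_mulVec, Matrix.mulVec_mulVec, hBA, Matrix.smul_mulVec]
      rw [hwk, hswap, ih, Matrix.mulVec_smul, smul_smul, ← hwk]
      congr 1
      rw [pow_succ]
      ring
  have hw0 : ∀ k : ℕ, w k ≠ 0 := by
    intro k h
    apply hv
    have hinj := Matrix.mulVec_injective_iff_isUnit.mpr (hA.pow k)
    apply hinj
    rw [Matrix.mulVec_zero]
    exact h
  set μs : Fin p → ℂ := fun i => ζ⁻¹ ^ (i : ℕ) * μ with hμs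
  have hinj : Function.Injective μs := by
    intro a b hab
    have := hprim.inv.pow_inj a.2 b.2 (mul_right_cancel₀ hμ hab)
    exact Fin.ext this
  have hli : LinearIndependent ℂ (fun i : Fin p => w (i : ℕ)) := by
    refine Module.End.eigenvectors_linearIndependent' (Matrix.mulVecLin B) μs hinj _
      (fun i => ⟨Module.End.mem_eigenspace_iff.2 ?_, hw0 i⟩)
    rw [Matrix.mulVecLin_apply]
    exact hwB i
  have hcard : Fintype.card (Fin p) = Module.finrank ℂ (Fin p → ℂ) := by
    rw [Fintype.card_fin, Module.finrank_fin_fun]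
  let b : Module.Basis (Fin p) ℂ (Fin p → ℂ) :=
    haveI : Nonempty (Fin p) := ⟨⟨0, hp⟩⟩
    basisOfLinearIndependentOfCardEqFinrank hli hcard
  have hb : ∀ i : Fin p, b i = w (i : ℕ) := by
    intro i
    haveI : Nonempty (Fin p) := ⟨⟨0, hp⟩⟩
    rw [show b = basisOfLinearIndependentOfCardEqFinrank hli hcard from rfl,
      coe_basisOfLinearIndependentOfCardEqFinrank]
  have hbB : ∀ i : Fin p, B.mulVec (b i) = μs i • b i := by
    intro i; rw [hb i]; exact hwB i
  have hbBn : ∀ (n : ℕ) (i : Fin p), (B ^ n).mulVec (b i) = (μs i) ^ n • b i := by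
    intro n i
    induction n with
    | zero => simp
    | succ n ih =>
      rw [pow_succ', ← Matrix.mulVec_mulVec, ih, Matrix.mulVec_smul, hbB, smul_smul, pow_succ]
  have hBp : B ^ p = (μ ^ p) • (1 : Matrix (Fin p) (Fin p) ℂ) := by
    refine mat_ext_basis b fun i => ?_
    rw [hbBn p i, Matrix.smul_mulVec, Matrix.one_mulVec]
    congr 1
    rw [hμs]
    simp only []
    rw [mul_pow, ← pow_mul, mul_comm (i : ℕ) p, pow_mul, hprim.inv.pow_eq_one, one_pow, one_mul]
  have hdet : B.det = μ ^ p * ζ⁻¹ ^ (∑ i ∈ Finset.range p, i) := by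
    have h1 : B.det = LinearMap.det (Matrix.toLin' B) := (LinearMap.det_toLin' B).symm
    have h2 : LinearMap.toMatrix b b (Matrix.toLin' B) = Matrix.diagonal μs := by
      refine Matrix.ext fun i j => ?_
      rw [LinearMap.toMatrix_apply, Matrix.toLin'_apply, hbB, _root_.map_smul]
      rcases eq_or_ne i j with rfl | hij
      · rw [Matrix.diagonal_apply_eq, b.repr_self, Finsupp.smul_single,
          Finsupp.single_eq_same, smul_eq_mul, mul_one]
      · rw [Matrix.diagonal_apply_ne _ hij, b.repr_self, Finsupp.smul_single,
          Finsupp.single_eq_of_ne hij]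
    rw [h1, ← LinearMap.det_toMatrix b, h2, Matrix.det_diagonal, hμs]
    simp only []
    rw [Finset.prod_mul_distrib, Finset.prod_const, Finset.prod_pow_eq_pow_sum,
      Finset.card_univ, Fintype.card_fin,
      show (∑ i : Fin p, (i : ℕ)) = ∑ i ∈ Finset.range p, i from
        Fin.sum_univ_eq_sum_range (fun i => i) p, mul_comm]
  exact ⟨b, hb, hbB, hBp, hdet⟩

end CPC

namespace CPC
open Matrix
variable {p : ℕ}

lemma SU.mat_mul_star (a : SU p) : a.mat * star a.mat = 1 := a.val.2.2

lemma shift_step (hp : 0 < p) {M : Matrix (Fin p) (Fin p) ℂ} {τ : ℂ}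
    (hMp : M ^ p = τ • (1 : Matrix (Fin p) (Fin p) ℂ))
    {v : Fin p → ℂ} (b : Module.Basis (Fin p) ℂ (Fin p → ℂ))
    (hb : ∀ i : Fin p, b i = (M ^ (i : ℕ)).mulVec v) (i : Fin p) :
    M.mulVec (b i) = if h : (i : ℕ) + 1 < p then b ⟨(i : ℕ) + 1, h⟩ else τ • b ⟨0, hp⟩ := by
  rw [hb i, Matrix.mulVec_mulVec, ← pow_succ']
  split_ifs with h
  · rw [hb ⟨_, h⟩]
  · have hip : (i : ℕ) + 1 = p := by have := i.isLt; omega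
    rw [hip, hMp, hb ⟨0, hp⟩, pow_zero, Matrix.one_mulVec, Matrix.smul_mulVec,
      Matrix.one_mulVec]

noncomputable def nrm (w : Fin p → ℂ) : ℝ := ∑ i, Complex.normSq (w i)

lemma dot_self_eq_nrm (w : Fin p → ℂ) : star w ⬝ᵥ w = ((nrm w : ℝ) : ℂ) := by
  rw [nrm]
  push_cast
  refine Finset.sum_congr rfl fun i _ => ?_
  rw [Pi.star_apply, ← Complex.mul_conj, RCLike.star_def]
  exact mul_comm _ _

lemma nrm_pos {w : Fin p → ℂ} (hw : w ≠ 0) : 0 < nrm w := by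
  obtain ⟨i, hi⟩ := Function.ne_iff.mp hw
  refine Finset.sum_pos' (fun j _ => Complex.normSq_nonneg _) ⟨i, Finset.mem_univ i, ?_⟩
  exact Complex.normSq_pos.mpr hi

lemma exists_eig (hp : 0 < p) (M : Matrix (Fin p) (Fin p) ℂ) :
    ∃ (μ : ℂ) (v : Fin p → ℂ), v ≠ 0 ∧ M.mulVec v = μ • v := by
  haveI : Nonempty (Fin p) := ⟨⟨0, hp⟩⟩
  obtain ⟨μ, hμ⟩ := Module.End.exists_eigenvalue (Matrix.mulVecLin M)
  obtain ⟨v, hv⟩ := hμ.exists_hasEigenvector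
  refine ⟨μ, v, hv.2, ?_⟩
  rw [← Matrix.mulVecLin_apply]
  exact Module.End.mem_eigenspace_iff.1 hv.1

lemma pairAnalysis (hp : p.Prime) {ζ : ℂ} (hprim : IsPrimitiveRoot ζ p)
    {A B : Matrix (Fin p) (Fin p) ℂ} (hA : IsUnit A) (hB : IsUnit B)
    (hdA : A.det = 1) (hdB : B.det = 1)
    (hcomm : A * B = ζ • (B * A)) :
    (A ^ p = (ζ⁻¹ ^ (∑ i ∈ Finset.range p, i)) • 1) ∧
    (∃ μ : ℂ, μ ^ p = ζ ^ (∑ i ∈ Finset.range p, i)) ∧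
    (∀ μ₀ : ℂ, μ₀ ^ p = ζ ^ (∑ i ∈ Finset.range p, i) →
      ∃ bb : Module.Basis (Fin p) ℂ (Fin p → ℂ),
        (∀ i : Fin p, bb i = (A ^ (i : ℕ)).mulVec (bb ⟨0, hp.pos⟩)) ∧
        (∀ i : Fin p, B.mulVec (bb i) = (ζ⁻¹ ^ (i : ℕ) * μ₀) • bb i)) := by
  haveI : NeZero p := ⟨hp.pos.ne'⟩
  set E : ℕ := ∑ i ∈ Finset.range p, i with hE
  have hζ0 : ζ ≠ 0 := fun h => by
    have := hprim.pow_eq_one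
    rw [h, zero_pow hp.pos.ne'] at this
    exact zero_ne_one this
  have hζE : ζ ^ E ≠ 0 := pow_ne_zero _ hζ0
  have hBA : B * A = ζ⁻¹ • (A * B) := by
    rw [hcomm, smul_smul, inv_mul_cancel₀ hζ0, one_smul]
  -- A^p is the scalar τ
  have hApart : A ^ p = (ζ⁻¹ ^ E) • 1 := by
    obtain ⟨lam, w, hw, heigA⟩ := exists_eig hp.pos A
    have hlam0 : lam ≠ 0 := by
      intro h
      apply hw
      have hinj := Matrix.mulVec_injective_iff_isUnit.mpr hA
      apply hinj
      rw [Matrix.mulVec_zero, heigA, h, zero_smul]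
    obtain ⟨b2, _, _, hAp, hdetA⟩ := core hp.pos hprim.inv hB hBA hw hlam0 heigA
    rw [inv_inv] at hdetA
    have hlamp : lam ^ p = ζ⁻¹ ^ E := by
      have h1 : lam ^ p * ζ ^ E = 1 := by rw [← hdA, hdetA, hE]
      rw [inv_pow]
      exact eq_inv_of_mul_eq_one_left (by rw [mul_comm] at h1 ⊢; exact h1)
    rw [← hlamp]
    exact hAp
  refine ⟨hApart, ?_⟩
  obtain ⟨μ, v, hv, heig⟩ := exists_eig hp.pos B
  have hμ0 : μ ≠ 0 := by
    intro h
    apply hv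
    have hinj := Matrix.mulVec_injective_iff_isUnit.mpr hB
    apply hinj
    rw [Matrix.mulVec_zero, heig, h, zero_smul]
  obtain ⟨b1, hb1def, hb1B, _, hdetB⟩ := core hp.pos hprim hA hcomm hv hμ0 heig
  have hμp : μ ^ p = ζ ^ E := by
    have h1 : μ ^ p * (ζ ^ E)⁻¹ = 1 := by rw [← inv_pow, ← hdetB, hdB]
    exact (mul_inv_eq_one₀ hζE).mp h1
  refine ⟨⟨μ, hμp⟩, ?_⟩
  intro μ₀ hμ₀p
  have hμ₀0 : μ₀ ≠ 0 := fun h => hζE (by rw [← hμ₀p, h, zero_pow hp.pos.ne'])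
  have hr : (μ₀ * μ⁻¹) ^ p = 1 := by
    rw [mul_pow, inv_pow, hμp, hμ₀p, mul_inv_cancel₀ hζE]
  obtain ⟨j, hj, hζj⟩ := hprim.eq_pow_of_pow_eq_one hr
  set k0 : ℕ := (p - j) % p with hk0def
  have hk0 : k0 < p := Nat.mod_lt _ hp.pos
  have hzk : ζ⁻¹ ^ k0 = μ₀ * μ⁻¹ := by
    rcases Nat.eq_zero_or_pos j with rfl | hj0
    · rw [← hζj, pow_zero, hk0def, Nat.sub_zero, Nat.mod_self, pow_zero]
    · have hke : k0 = p - j := Nat.mod_eq_of_lt (by omega)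
      rw [hke, inv_pow, ← hζj]
      exact inv_eq_of_mul_eq_one_left (by
        rw [← pow_add, show j + (p - j) = p by omega]
        exact hprim.pow_eq_one)
  have hμk : ζ⁻¹ ^ k0 * μ = μ₀ := by
    rw [hzk, mul_assoc, inv_mul_cancel₀ hμ0, mul_one]
  set v₀ : Fin p → ℂ := b1 ⟨k0, hk0⟩ with hv₀def
  have hv₀ : v₀ ≠ 0 := b1.ne_zero _
  have heig₀ : B.mulVec v₀ = μ₀ • v₀ := by
    rw [hv₀def, hb1B ⟨k0, hk0⟩, hμk]
  obtain ⟨b2, hb2def, hb2B, _, _⟩ := core hp.pos hprim hA hcomm hv₀ hμ₀0 heig₀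
  refine ⟨b2, fun i => ?_, hb2B⟩
  rw [hb2def i, hb2def ⟨0, hp.pos⟩]
  simp [Matrix.one_mulVec]

lemma conj_comm_aux {U M M' : Matrix (Fin p) (Fin p) ℂ}
    (hM : M * star M = 1) (hM' : star M' * M' = 1) (h : U * M = M' * U) :
    (star U * U) * M = M * (star U * U) := by
  have h1 : star M * star U = star U * star M' := by
    have h0 := congrArg star h
    rw [Matrix.star_mul, Matrix.star_mul] at h0
    exact h0
  have h2 : star U * M' = M * star U := by
    calc star U * M' = (M * star M) * (star U * M') := by rw [hM, Matrix.one_mul]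
      _ = M * ((star M * star U) * M') := by
          rw [Matrix.mul_assoc, Matrix.mul_assoc]
      _ = M * ((star U * star M') * M') := by rw [h1]
      _ = M * (star U * (star M' * M')) := by rw [Matrix.mul_assoc]
      _ = M * star U := by rw [hM', Matrix.mul_one]
  calc (star U * U) * M = star U * (U * M) := by rw [Matrix.mul_assoc]
    _ = star U * (M' * U) := by rw [h]
    _ = (star U * M') * U := by rw [Matrix.mul_assoc]
    _ = (M * star U) * U := by rw [h2]
    _ = M * (star U * U) := by rw [Matrix.mul_assoc]

theorem main (hp : p.Prime)
    (c : SU p) (hc : c ∈ Subgroup.center (SU p)) (hc1 : c ≠ 1)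
    (x y x' y' : SU p) (hxy : ⁅x, y⁆ = c) (hxy' : ⁅x', y'⁆ = c) :
    ∃ g : SU p, x' = g * x * g⁻¹ ∧ y' = g * y * g⁻¹ := by
  haveI : Fact p.Prime := ⟨hp⟩
  haveI : NeZero p := ⟨hp.pos.ne'⟩
  obtain ⟨ζ, hCmat, hζp⟩ := center_scalar hp hc
  have hζ1 : ζ ≠ 1 := by
    intro h
    apply hc1
    apply SU.ext'
    rw [hCmat, h, one_smul]
    rfl
  have hord : orderOf ζ = p := orderOf_eq_prime hζp hζ1
  have hprim : IsPrimitiveRoot ζ p := hord ▸ IsPrimitiveRoot.orderOf ζ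
  have hζ0 : ζ ≠ 0 := fun h => by
    rw [h, zero_pow hp.pos.ne'] at hζp; exact zero_ne_one hζp
  set E : ℕ := ∑ i ∈ Finset.range p, i with hE
  have relFact : ∀ a b : SU p, ⁅a, b⁆ = c → a.mat * b.mat = ζ • (b.mat * a.mat) := by
    intro a b hab
    have h1 : a * b = c * (b * a) := by rw [← hab]; group
    have h2 := congrArg SU.mat h1
    rw [SU.mat_mul, SU.mat_mul, SU.mat_mul, hCmat, smul_mul_assoc, one_mul] at h2
    exact h2
  have unitFact : ∀ a : SU p, IsUnit a.mat := fun a =>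
    (Matrix.isUnit_iff_isUnit_det _).mpr (by rw [SU.mat_det]; exact isUnit_one)
  have hXY : x.mat * y.mat = ζ • (y.mat * x.mat) := relFact x y hxy
  have hXY' : x'.mat * y'.mat = ζ • (y'.mat * x'.mat) := relFact x' y' hxy'
  obtain ⟨hXp, ⟨μ, hμp⟩, hspec⟩ :=
    pairAnalysis hp hprim (unitFact x) (unitFact y) (SU.mat_det x) (SU.mat_det y) hXY
  obtain ⟨hX'p, -, hspec'⟩ :=
    pairAnalysis hp hprim (unitFact x') (unitFact y') (SU.mat_det x') (SU.mat_det y') hXY'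
  have hμ0 : μ ≠ 0 := by
    intro h
    rw [h, zero_pow hp.pos.ne'] at hμp
    exact (pow_ne_zero E hζ0) hμp.symm
  obtain ⟨b, hbdef, hbY⟩ := hspec μ hμp
  obtain ⟨b'', hb''def, hb''Y⟩ := hspec' μ hμp
  set v : Fin p → ℂ := b ⟨0, hp.pos⟩ with hvdef
  set v'' : Fin p → ℂ := b'' ⟨0, hp.pos⟩ with hv''def
  set u : (Fin p → ℂ) ≃ₗ[ℂ] (Fin p → ℂ) := b.equiv b'' (Equiv.refl _) with hudef
  set U : Matrix (Fin p) (Fin p) ℂ :=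
    LinearMap.toMatrix' (u : (Fin p → ℂ) →ₗ[ℂ] (Fin p → ℂ)) with hUdef
  have hUapp : ∀ z, U.mulVec z = u z := fun z => by
    rw [hUdef, ← Matrix.toLin'_apply, Matrix.toLin'_toMatrix']
    rfl
  have hUb : ∀ i : Fin p, U.mulVec (b i) = b'' i := fun i => by
    rw [hUapp, hudef, b.equiv_apply, Equiv.refl_apply]
  have hUinj : Function.Injective U.mulVec := fun z w h =>
    u.injective (by rw [← hUapp, ← hUapp, h])
  have hUunit : IsUnit U := Matrix.mulVec_injective_iff_isUnit.mp hUinj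
  -- intertwining
  have hUX : U * x.mat = x'.mat * U := by
    refine mat_ext_basis b fun i => ?_
    rw [← Matrix.mulVec_mulVec, ← Matrix.mulVec_mulVec, hUb i,
      shift_step hp.pos hXp b hbdef i, shift_step hp.pos hX'p b'' hb''def i]
    split_ifs with h
    · rw [hUb]
    · rw [Matrix.mulVec_smul, hUb]
  have hUY : U * y.mat = y'.mat * U := by
    refine mat_ext_basis b fun i => ?_
    rw [← Matrix.mulVec_mulVec, ← Matrix.mulVec_mulVec, hUb i, hbY i,
      Matrix.mulVec_smul, hUb i, hb''Y i]
  -- H := star U * U is scalar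
  have hHX : (star U * U) * x.mat = x.mat * (star U * U) :=
    conj_comm_aux (SU.mat_mul_star x) (SU.star_mat_mul x') hUX
  have hHY : (star U * U) * y.mat = y.mat * (star U * U) :=
    conj_comm_aux (SU.mat_mul_star y) (SU.star_mat_mul y') hUY
  have hYv : y.mat.mulVec v = μ • v := by simpa [hvdef] using hbY ⟨0, hp.pos⟩
  set z : Fin p → ℂ := (star U * U).mulVec v with hzdef
  have hzeig : y.mat.mulVec z = μ • z := by
    rw [hzdef, Matrix.mulVec_mulVec, ← hHY, ← Matrix.mulVec_mulVec, hYv, Matrix.mulVec_smul]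
  set cc : Fin p →₀ ℂ := b.repr z with hccdef
  have hccl : ∀ l : Fin p, l ≠ ⟨0, hp.pos⟩ → cc l = 0 := by
    intro l hl
    have h2 : z = ∑ i, cc i • b i := (b.sum_repr z).symm
    have hkey : (∑ i, (cc i * (ζ⁻¹ ^ (i : ℕ) * μ)) • b i) = ∑ i, (μ * cc i) • b i := by
      have h3 : y.mat.mulVec z = ∑ i, (cc i * (ζ⁻¹ ^ (i : ℕ) * μ)) • b i := by
        conv_lhs => rw [h2]
        rw [← Matrix.mulVecLin_apply, map_sum]
        refine Finset.sum_congr rfl fun i _ => ?_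
        rw [_root_.map_smul, Matrix.mulVecLin_apply, hbY i, smul_smul]
      have h4 : μ • z = ∑ i, (μ * cc i) • b i := by
        conv_lhs => rw [h2]
        rw [Finset.smul_sum]
        refine Finset.sum_congr rfl fun i _ => ?_
        rw [smul_smul]
      rw [← h3, ← h4, hzeig]
    have h5 : (fun i : Fin p => cc i * (ζ⁻¹ ^ (i : ℕ) * μ)) =
        (fun i : Fin p => μ * cc i) := by
      calc (fun i : Fin p => cc i * (ζ⁻¹ ^ (i : ℕ) * μ))
          = ⇑(b.repr (∑ i, (cc i * (ζ⁻¹ ^ (i : ℕ) * μ)) • b i)) := by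
            rw [b.repr_sum_self]
        _ = ⇑(b.repr (∑ i, (μ * cc i) • b i)) := by rw [hkey]
        _ = fun i : Fin p => μ * cc i := by rw [b.repr_sum_self]
    have h9 := congrFun h5 l
    have h8 : ζ⁻¹ ^ (l : ℕ) ≠ 1 := by
      intro h
      apply hl
      refine Fin.ext ?_
      refine hprim.inv.pow_inj l.2 hp.pos ?_
      rw [h, pow_zero]
    have h10 : (ζ⁻¹ ^ (l : ℕ) - 1) * (cc l * μ) = 0 := by linear_combination h9
    rcases mul_eq_zero.mp h10 with h11 | h11
    · exact absurd (by linear_combination h11) h8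
    · rcases mul_eq_zero.mp h11 with h12 | h12
      · exact h12
      · exact absurd h12 hμ0
  have hzv : z = cc ⟨0, hp.pos⟩ • v := by
    calc z = ∑ i, cc i • b i := (b.sum_repr z).symm
      _ = cc ⟨0, hp.pos⟩ • b ⟨0, hp.pos⟩ :=
        Finset.sum_eq_single (⟨0, hp.pos⟩ : Fin p)
          (fun l _ hl => by rw [hccl l hl, zero_smul])
          (fun h => absurd (Finset.mem_univ _) h)
  set d : ℂ := cc ⟨0, hp.pos⟩ with hddef
  -- positivity of d
  have hv0 : v ≠ 0 := b.ne_zero _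
  have hUv0 : U.mulVec v ≠ 0 := fun h =>
    hv0 (hUinj (by rw [h, Matrix.mulVec_zero]))
  have hdot : d * ((nrm v : ℝ) : ℂ) = ((nrm (U.mulVec v) : ℝ) : ℂ) := by
    have h1 : star v ⬝ᵥ z = d * ((nrm v : ℝ) : ℂ) := by
      rw [hzv, dotProduct_smul, dot_self_eq_nrm, smul_eq_mul]
    have h2 : star v ⬝ᵥ z = ((nrm (U.mulVec v) : ℝ) : ℂ) := by
      rw [hzdef, ← Matrix.mulVec_mulVec, Matrix.dotProduct_mulVec, ← dot_self_eq_nrm,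
        Matrix.star_mulVec]
      rfl
    rw [← h1, h2]
  have hnv := nrm_pos hv0
  have hnUv := nrm_pos hUv0
  set dr : ℝ := nrm (U.mulVec v) / nrm v with hdrdef
  have hdr_pos : 0 < dr := div_pos hnUv hnv
  have hd : d = ((dr : ℝ) : ℂ) := by
    rw [hdrdef]
    push_cast
    rw [eq_div_iff (by exact_mod_cast hnv.ne')]
    exact hdot
  have hHscal : star U * U = d • (1 : Matrix (Fin p) (Fin p) ℂ) := by
    refine mat_ext_basis b fun i => ?_
    rw [Matrix.smul_mulVec, Matrix.one_mulVec]
    have hcpow : (star U * U) * x.mat ^ (i : ℕ) = x.mat ^ (i : ℕ) * (star U * U) := by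
      have hc : Commute (star U * U) x.mat := hHX
      exact (hc.pow_right (i : ℕ)).eq
    calc (star U * U).mulVec (b i)
        = (star U * U).mulVec ((x.mat ^ (i : ℕ)).mulVec v) := by rw [hbdef i]
      _ = ((star U * U) * x.mat ^ (i : ℕ)).mulVec v := by rw [Matrix.mulVec_mulVec]
      _ = (x.mat ^ (i : ℕ) * (star U * U)).mulVec v := by rw [hcpow]
      _ = (x.mat ^ (i : ℕ)).mulVec z := by rw [← Matrix.mulVec_mulVec, ← hzdef]
      _ = (x.mat ^ (i : ℕ)).mulVec (d • v) := by rw [hzv, hddef]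
      _ = d • (x.mat ^ (i : ℕ)).mulVec v := by rw [Matrix.mulVec_smul]
      _ = d • b i := by rw [← hbdef i]
  -- normalize
  have hdetU0 : U.det ≠ 0 := (Matrix.isUnit_iff_isUnit_det U).mp hUunit |>.ne_zero
  obtain ⟨ω, hω⟩ := IsAlgClosed.exists_pow_nat_eq (U.det)⁻¹ hp.pos
  have hω0 : ω ≠ 0 := fun h => by
    rw [h, zero_pow hp.pos.ne'] at hω
    exact (inv_ne_zero hdetU0) hω.symm
  set g : Matrix (Fin p) (Fin p) ℂ := ω • U with hgdef
  have hgdet : g.det = 1 := by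
    rw [hgdef, Matrix.det_smul, Fintype.card_fin, hω, inv_mul_cancel₀ hdetU0]
  have hdp : (d : ℂ) ^ p = star U.det * U.det := by
    have h1 : (star U * U).det = d ^ p := by
      rw [hHscal, Matrix.det_smul, Matrix.det_one, mul_one, Fintype.card_fin]
    have h2 : (star U * U).det = star U.det * U.det := by
      rw [Matrix.det_mul, show (star U : Matrix (Fin p) (Fin p) ℂ) = Uᴴ from rfl,
        Matrix.det_conjTranspose]
    rw [← h1, h2]
  have hsnn : (0 : ℝ) ≤ Complex.normSq ω * dr :=
    mul_nonneg (Complex.normSq_nonneg ω) hdr_pos.le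
  have hs1 : Complex.normSq ω * dr = 1 := by
    have hsp : ((Complex.normSq ω * dr : ℝ) : ℂ) ^ p = 1 := by
      push_cast
      rw [← Complex.mul_conj ω]
      rw [← hd]
      rw [mul_pow, mul_pow, ← map_pow, hω, hdp]
      rw [show (starRingEnd ℂ) ((U.det)⁻¹) = (star U.det)⁻¹ by rw [map_inv₀]; rfl]
      field_simp
      exact div_self (star_ne_zero.mpr hdetU0)
    have hsp' : (Complex.normSq ω * dr) ^ p = 1 := by exact_mod_cast hsp
    rcases lt_trichotomy (Complex.normSq ω * dr) 1 with h | h | h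
    · exfalso
      have := pow_lt_one₀ hsnn h hp.pos.ne'
      rw [hsp'] at this
      exact lt_irrefl _ this
    · exact h
    · exfalso
      have := one_lt_pow₀ h hp.pos.ne'
      rw [hsp'] at this
      exact lt_irrefl _ this
  have hgu : star g * g = 1 := by
    rw [hgdef, star_smul, smul_mul_smul_comm, hHscal, hd, smul_smul]
    rw [show (star ω : ℂ) * ω = ((Complex.normSq ω : ℝ) : ℂ) by
      rw [← Complex.mul_conj ω]; exact mul_comm _ _]
    rw [← Complex.ofReal_mul, hs1, Complex.ofReal_one, one_smul]
  have hgX : g * x.mat = x'.mat * g := by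
    rw [hgdef, smul_mul_assoc, mul_smul_comm, hUX]
  have hgY : g * y.mat = y'.mat * g := by
    rw [hgdef, smul_mul_assoc, mul_smul_comm, hUY]
  refine ⟨SU.mk' g hgu hgdet, ?_, ?_⟩
  · rw [eq_mul_inv_iff_mul_eq]
    apply SU.ext'
    rw [SU.mat_mul, SU.mat_mul]
    exact hgX.symm
  · rw [eq_mul_inv_iff_mul_eq]
    apply SU.ext'
    rw [SU.mat_mul, SU.mat_mul]
    exact hgY.symm

end CPC


/-- For a prime `p` and a nontrivial central element `c` of `SU(p)`, any two pairs of
elements of `SU(p)` with commutator `c` are simultaneously conjugate. -/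
theorem commutator_pairs_conjugate (p : ℕ) (hp : p.Prime)
    (c : SU p) (hc : c ∈ Subgroup.center (SU p)) (hc1 : c ≠ 1)
    (x y x' y' : SU p) (hxy : ⁅x, y⁆ = c) (hxy' : ⁅x', y'⁆ = c) :
    ∃ g : SU p, x' = g * x * g⁻¹ ∧ y' = g * y * g⁻¹ :=
  CPC.main hp c hc hc1 x y x' y' hxy hxy'
end

section
/- Let p be a prime, m ≥ 1 and n ≥ 1. Let B_n = {(x̲_1,...,x̲_n) ∈ (SU(p)^m)^n : [x̲_i, x̲_j] ∈ Δ(Z/p) for all i,j} with the subspace topology. Then the map B_n → (Δ(Z/p))^{n×n} sending (x̲_1,...,x̲_n) to the matrix of commutators ([x̲_i, x̲_j])_{i,j} is locally constant; consequently, for each antisymmetric n×n matrix C with entries in Δ(Z/p), the subspace Hom(Z^n, G_{m,p})_C, consisting of commuting n-tuples in G_{m,p} possessing a lift to B_n whose commutator matrix equals C, is both open and closed in Hom(Z^n, G_{m,p}). -/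
open scoped commutatorElement

/-- `B_n`: the space of `n`-tuples in `SU(p)^m` that commute up to elements of the
diagonal central subgroup `Δ(Z/p)`. -/
def Bset (p m n : ℕ) : Set (Fin n → (Fin m → SU p)) :=
  {x | ∀ i j, ⁅x i, x j⁆ ∈ DeltaZp p m}

/-- The map `B_n → Hom(Z^n, G_{m,p})` obtained by applying the quotient homomorphism
`SU(p)^m → G_{m,p}` in each coordinate. -/
def BtoHom (p m n : ℕ) : Bset p m n → commTuples (Gmp p m) n := fun x =>
  ⟨fun i => QuotientGroup.mk (x.1 i), by
    intro i j
    apply commutatorElement_eq_one_iff_commute.mp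
    show ⁅(QuotientGroup.mk' (DeltaZp p m)) (x.1 i), (QuotientGroup.mk' (DeltaZp p m)) (x.1 j)⁆ = 1
    rw [← map_commutatorElement (QuotientGroup.mk' (DeltaZp p m))]
    exact (QuotientGroup.eq_one_iff _).mpr (x.2 i j)⟩


/-! ### Auxiliary material -/

noncomputable instance (p : ℕ) : IsTopologicalGroup (Matrix.unitaryGroup (Fin p) ℂ) where
  continuous_mul := by
    apply Continuous.subtype_mk
    exact (continuous_subtype_val.comp continuous_fst).matrix_mul
      (continuous_subtype_val.comp continuous_snd)
  continuous_inv := by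
    apply Continuous.subtype_mk
    exact (continuous_subtype_val.matrix_conjTranspose :
      Continuous fun A : Matrix.unitaryGroup (Fin p) ℂ => star (A : Matrix (Fin p) (Fin p) ℂ))

lemma diag_mem_SU {p : ℕ} (d : Fin p → ℂ) (hd : ∀ i, d i * star (d i) = 1)
    (hdet : ∏ i, d i = 1) : ∃ x : SU p, SU.mat x = Matrix.diagonal d := by
  have hu : Matrix.diagonal d ∈ Matrix.unitaryGroup (Fin p) ℂ := by
    rw [Matrix.mem_unitaryGroup_iff, Matrix.star_eq_conjTranspose,
      Matrix.diagonal_conjTranspose, Matrix.diagonal_mul_diagonal]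
    have : (fun i => d i * star d i) = fun _ => (1 : ℂ) := funext fun i => hd i
    rw [this, Matrix.diagonal_one]
  have hs : (⟨Matrix.diagonal d, hu⟩ : Matrix.unitaryGroup (Fin p) ℂ) ∈ SUgrp p := by
    show Matrix.det (Matrix.diagonal d) = 1
    rw [Matrix.det_diagonal]; exact hdet
  exact ⟨⟨⟨Matrix.diagonal d, hu⟩, hs⟩, rfl⟩

lemma permdiag_mem_SU {p : ℕ} (σ : Equiv.Perm (Fin p)) (d : Fin p → ℂ)
    (hd : ∀ i, d i * star (d i) = 1)
    (hdet : (Equiv.Perm.sign σ : ℂ) * ∏ i, d i = 1) :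
    ∃ x : SU p, SU.mat x = (Matrix.diagonal d).submatrix σ id := by
  have hu : (Matrix.diagonal d).submatrix σ id ∈ Matrix.unitaryGroup (Fin p) ℂ := by
    rw [Matrix.mem_unitaryGroup_iff, Matrix.star_eq_conjTranspose,
      Matrix.conjTranspose_submatrix, Matrix.diagonal_conjTranspose]
    have h2 : (Matrix.diagonal d).submatrix σ (id : Fin p → Fin p)
        = (Matrix.diagonal d).submatrix σ (Equiv.refl (Fin p)) := rfl
    have h3 : (Matrix.diagonal (star d)).submatrix (id : Fin p → Fin p) σ
        = (Matrix.diagonal (star d)).submatrix (Equiv.refl (Fin p)) σ := rfl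
    rw [h2, h3, Matrix.submatrix_mul_equiv, Matrix.diagonal_mul_diagonal]
    have : (fun i => d i * star d i) = fun _ => (1 : ℂ) := funext fun i => hd i
    rw [this, Matrix.diagonal_one]
    exact Matrix.submatrix_one_equiv σ
  have hs : (⟨_, hu⟩ : Matrix.unitaryGroup (Fin p) ℂ) ∈ SUgrp p := by
    show Matrix.det ((Matrix.diagonal d).submatrix σ id) = 1
    rw [Matrix.det_permute, Matrix.det_diagonal]
    exact_mod_cast hdet
  exact ⟨⟨⟨_, hu⟩, hs⟩, rfl⟩

lemma center_scalar {p : ℕ} (hp : p.Prime) {A : SU p} (hA : A ∈ Subgroup.center (SU p)) :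
    ∃ c : ℂ, c ^ p = 1 ∧ SU.mat A = c • (1 : Matrix (Fin p) (Fin p) ℂ) := by
  haveI : NeZero p := ⟨hp.ne_zero⟩
  set M := SU.mat A with hM
  have hcomm : ∀ x : SU p, M * SU.mat x = SU.mat x * M := by
    intro x
    have h := (Subgroup.mem_center_iff.mp hA) x
    exact (congrArg SU.mat h).symm
  have hoff : ∀ r s : Fin p, r ≠ s → M r s = 0 := by
    intro r s hrs
    set d : Fin p → ℂ := fun t => if t = r then Complex.I else if t = s then -Complex.I else 1
      with hdd
    have hd : ∀ i, d i * star (d i) = 1 := by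
      intro i
      by_cases h1 : i = r
      · simp [hdd, h1, Complex.star_def]
      · by_cases h2 : i = s <;> simp [hdd, h1, h2, Ne.symm hrs, Complex.star_def]
    have hdet : ∏ i, d i = 1 := by
      rw [← Finset.mul_prod_erase Finset.univ d (Finset.mem_univ r)]
      rw [← Finset.mul_prod_erase _ d
        (Finset.mem_erase.mpr ⟨Ne.symm hrs, Finset.mem_univ s⟩)]
      rw [Finset.prod_eq_one]
      · simp [hdd, hrs.symm]
      · intro t ht
        simp only [Finset.mem_erase] at ht
        simp [hdd, ht.1, ht.2.1]
    obtain ⟨x, hx⟩ := diag_mem_SU d hd hdet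
    have h := hcomm x
    rw [hx] at h
    have h1 : M r s * d s = d r * M r s := by
      have := congrFun (congrFun h r) s
      simpa [Matrix.mul_diagonal, Matrix.diagonal_mul] using this
    have hds : d s = -Complex.I := by simp [hdd, hrs.symm]
    have hdr : d r = Complex.I := by simp [hdd]
    rw [hds, hdr] at h1
    linear_combination (Complex.I / 2) * h1 + (M r s) * Complex.I_sq
  have hdiag : ∀ r s : Fin p, M r r = M s s := by
    intro r s
    rcases eq_or_ne r s with rfl | hrs
    · rfl
    set σ : Equiv.Perm (Fin p) := Equiv.swap r s with hσ
    set d : Fin p → ℂ := fun t => if t = r then -1 else 1 with hdd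
    have hd : ∀ i, d i * star (d i) = 1 := by
      intro i
      by_cases h1 : i = r <;> simp [hdd, h1]
    have hdet : (Equiv.Perm.sign σ : ℂ) * ∏ i, d i = 1 := by
      have h1 : ∏ i, d i = -1 := by
        rw [← Finset.mul_prod_erase Finset.univ d (Finset.mem_univ r),
          Finset.prod_eq_one]
        · simp [hdd]
        · intro t ht
          simp only [Finset.mem_erase] at ht
          simp [hdd, ht.1]
      rw [h1, hσ, Equiv.Perm.sign_swap hrs]
      norm_num
    obtain ⟨x, hx⟩ := permdiag_mem_SU σ d hd hdet
    have h := hcomm x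
    rw [hx] at h
    have hPrs : ∀ k j : Fin p, (Matrix.diagonal d).submatrix σ id k j
        = if σ k = j then d j else 0 := by
      intro k j
      rw [Matrix.submatrix_apply, Matrix.diagonal_apply]
      simp only [id_eq]
      by_cases hkj : σ k = j <;> simp [hkj]
    have hMP : (M * (Matrix.diagonal d).submatrix σ id) r s = M r r := by
      rw [Matrix.mul_apply, Finset.sum_eq_single r]
      · rw [hPrs]
        have h1 : σ r = s := Equiv.swap_apply_left r s
        rw [if_pos h1]
        have : d s = 1 := by simp [hdd, hrs.symm]
        rw [this, mul_one]
      · intro k _ hk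
        rw [hPrs]
        have : σ k ≠ s := fun hc => hk (by
          have h2 : k = σ s := by rw [← hc]; simp [hσ]
          simpa [hσ, Equiv.swap_apply_right] using h2)
        rw [if_neg this, mul_zero]
      · intro hr; exact absurd (Finset.mem_univ r) hr
    have hPM : ((Matrix.diagonal d).submatrix σ id * M) r s = M s s := by
      rw [Matrix.mul_apply, Finset.sum_eq_single s]
      · rw [hPrs]
        have h1 : σ r = s := Equiv.swap_apply_left r s
        rw [if_pos h1]
        have : d s = 1 := by simp [hdd, hrs.symm]
        rw [this, one_mul]
      · intro k _ hk
        rw [hPrs]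
        have : σ r ≠ k := by
          rw [Equiv.swap_apply_left]; exact fun hc => hk hc.symm
        rw [if_neg this, zero_mul]
      · intro hr; exact absurd (Finset.mem_univ s) hr
    have h' := congrFun (congrFun h r) s
    rw [hMP, hPM] at h'
    exact h'
  have hscalar : M = (M 0 0) • (1 : Matrix (Fin p) (Fin p) ℂ) := by
    ext r s
    rcases eq_or_ne r s with rfl | hrs
    · rw [hdiag r 0]
      simp [Matrix.one_apply]
    · rw [hoff r s hrs]
      simp [Matrix.one_apply, hrs]
  refine ⟨M 0 0, ?_, hscalar⟩
  have hdet : M.det = 1 := A.2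
  rw [hscalar, Matrix.det_smul, Matrix.det_one, mul_one] at hdet
  simpa using hdet

lemma center_SU_finite {p : ℕ} (hp : p.Prime) : Finite (Subgroup.center (SU p)) := by
  haveI : NeZero p := ⟨hp.ne_zero⟩
  have hfin : Finite {z : ℂ // z ^ p = 1} := by
    have h : {z : ℂ | z ^ p = 1}.Finite := by
      have hne : (Polynomial.X ^ p - Polynomial.C 1 : Polynomial ℂ) ≠ 0 :=
        Polynomial.X_pow_sub_C_ne_zero hp.pos (1 : ℂ)
      have h2 := Polynomial.finite_setOf_isRoot hne
      refine Set.Finite.subset h2 ?_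
      intro z hz
      simp only [Set.mem_setOf_eq] at hz ⊢
      simp [Polynomial.IsRoot, sub_eq_zero, hz]
    exact h.to_subtype
  refine Finite.of_injective (fun A : Subgroup.center (SU p) =>
    (⟨(center_scalar hp A.2).choose, (center_scalar hp A.2).choose_spec.1⟩ :
      {z : ℂ // z ^ p = 1})) ?_
  intro A B hAB
  have hA := (center_scalar hp A.2).choose_spec.2
  have hB := (center_scalar hp B.2).choose_spec.2
  have hv : (center_scalar hp A.2).choose = (center_scalar hp B.2).choose :=
    congrArg Subtype.val hAB
  have hmat : SU.mat A.1 = SU.mat B.1 := by rw [hA, hB, hv]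
  exact Subtype.ext (Subtype.ext (Subtype.ext hmat))

lemma DeltaZp_finite (p m : ℕ) (hp : p.Prime) : Finite (DeltaZp p m) := by
  haveI := center_SU_finite hp
  have hc : ((Subgroup.center (SU p) : Set (SU p))).Finite := Set.toFinite _
  have himg : ((DeltaZp p m : Set (Fin m → SU p))).Finite := by
    rw [DeltaZp, Subgroup.coe_map]
    exact hc.image _
  exact himg.to_subtype

lemma DeltaZp_comm {p m : ℕ} {z : Fin m → SU p} (hz : z ∈ DeltaZp p m) :
    ∀ g : Fin m → SU p, z * g = g * z := by
  obtain ⟨c, hc, rfl⟩ := hz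
  intro g
  funext i
  have h := (Subgroup.mem_center_iff.mp hc) (g i)
  simpa [diagHom] using h.symm

lemma comm_mul_central {G : Type*} [Group G] (a b z w : G)
    (hz : ∀ g : G, z * g = g * z) (hw : ∀ g : G, w * g = g * w) :
    ⁅a * z, b * w⁆ = ⁅a, b⁆ := by
  have h1 : ⁅a * z, b * w⁆ = a * (z * (b * w) * z⁻¹) * (a⁻¹ * (w⁻¹ * b⁻¹)) := by
    simp only [commutatorElement_def, mul_inv_rev]; group
  have h2 : z * (b * w) * z⁻¹ = b * w := by rw [hz (b * w)]; group
  rw [h1, h2]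
  have h3 : a * (b * w) * (a⁻¹ * (w⁻¹ * b⁻¹)) = a * b * (w * a⁻¹ * w⁻¹) * b⁻¹ := by group
  have h4 : w * a⁻¹ * w⁻¹ = a⁻¹ := by rw [hw a⁻¹]; group
  rw [h3, h4, commutatorElement_def]

/-- For a prime `p`, `m ≥ 1` and `n ≥ 1`, the commutator-matrix map on `B_n` is locally
constant; consequently, for each antisymmetric matrix `C` with entries in `Δ(Z/p)`, the
subspace `Hom(Z^n, G_{m,p})_C` of commuting tuples admitting a lift with commutator matrix
`C` is both open and closed in `Hom(Z^n, G_{m,p})`. -/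
theorem commutatorMatrix_locallyConstant (p m n : ℕ) (hp : p.Prime) (hm : 1 ≤ m)
    (hn : 1 ≤ n) :
    IsLocallyConstant (fun x : Bset p m n => fun i j : Fin n =>
      (⟨⁅(x : Fin n → Fin m → SU p) i, (x : Fin n → Fin m → SU p) j⁆, x.2 i j⟩ :
        DeltaZp p m)) ∧
    ∀ C : Fin n → Fin n → ↥(DeltaZp p m),
      (∀ i, C i i = 1) → (∀ i j, C j i = (C i j)⁻¹) →
      (IsOpen {y : commTuples (Gmp p m) n |
        ∃ x : Fin n → (Fin m → SU p),
          (∀ i, QuotientGroup.mk (x i) = (y : Fin n → Gmp p m) i) ∧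
          ∀ i j, ⁅x i, x j⁆ = (C i j : Fin m → SU p)} ∧
      IsClosed {y : commTuples (Gmp p m) n |
        ∃ x : Fin n → (Fin m → SU p),
          (∀ i, QuotientGroup.mk (x i) = (y : Fin n → Gmp p m) i) ∧
          ∀ i j, ⁅x i, x j⁆ = (C i j : Fin m → SU p)}) := by
  haveI : NeZero p := ⟨hp.ne_zero⟩
  haveI : Finite (DeltaZp p m) := DeltaZp_finite p m hp
  haveI : DiscreteTopology ↥(DeltaZp p m) := Finite.instDiscreteTopology
  set F : Bset p m n → (Fin n → Fin n → ↥(DeltaZp p m)) := fun x => fun i j =>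
    (⟨⁅(x : Fin n → Fin m → SU p) i, (x : Fin n → Fin m → SU p) j⁆, x.2 i j⟩ :
      DeltaZp p m) with hF
  have hlc : IsLocallyConstant F := by
    rw [IsLocallyConstant.iff_continuous]
    refine continuous_pi fun i => continuous_pi fun j => Continuous.subtype_mk ?_ _
    have hxi : Continuous fun x : Bset p m n => (x : Fin n → Fin m → SU p) i :=
      (continuous_apply i).comp continuous_subtype_val
    have hxj : Continuous fun x : Bset p m n => (x : Fin n → Fin m → SU p) j :=
      (continuous_apply j).comp continuous_subtype_val
    simp only [commutatorElement_def]
    exact ((hxi.mul hxj).mul hxi.inv).mul hxj.inv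
  refine ⟨hlc, ?_⟩
  intro C _ _
  set P : (Fin n → (Fin m → SU p)) → (Fin n → Gmp p m) :=
    Pi.map (fun _ : Fin n => (QuotientGroup.mk : (Fin m → SU p) → Gmp p m)) with hP
  have hPopen : IsOpenMap P :=
    IsOpenMap.piMap (fun _ => QuotientGroup.isOpenMap_coe)
      (Filter.Eventually.of_forall fun _ => QuotientGroup.mk_surjective)
  -- if v maps onto a commuting tuple, then v ∈ Bset
  have hBmem : ∀ (y : commTuples (Gmp p m) n) (v : Fin n → (Fin m → SU p)),
      (∀ i, QuotientGroup.mk (v i) = (y : Fin n → Gmp p m) i) → v ∈ Bset p m n := by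
    intro y v hv i j
    rw [← QuotientGroup.eq_one_iff]
    show (QuotientGroup.mk' (DeltaZp p m)) ⁅v i, v j⁆ = 1
    rw [map_commutatorElement]
    simp only [QuotientGroup.mk'_apply, hv i, hv j]
    exact commutatorElement_eq_one_iff_commute.mpr (y.2 i j)
  -- the two goals
  constructor
  · -- openness
    obtain ⟨V, hVopen, hVeq⟩ := isOpen_induced_iff.mp (hlc {C})
    have hseteq : {y : commTuples (Gmp p m) n |
        ∃ x : Fin n → (Fin m → SU p),
          (∀ i, QuotientGroup.mk (x i) = (y : Fin n → Gmp p m) i) ∧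
          ∀ i j, ⁅x i, x j⁆ = (C i j : Fin m → SU p)} = Subtype.val ⁻¹' (P '' V) := by
      ext y
      constructor
      · rintro ⟨x, hx1, hx2⟩
        have hxB : x ∈ Bset p m n := fun i j => hx2 i j ▸ (C i j).2
        refine ⟨x, ?_, funext hx1⟩
        have : (⟨x, hxB⟩ : Bset p m n) ∈ F ⁻¹' {C} := by
          simp only [Set.mem_preimage, Set.mem_singleton_iff, hF]
          funext i j
          exact Subtype.ext (hx2 i j)
        rw [← hVeq] at this
        exact this
      · rintro ⟨v, hvV, hvP⟩
        have hv1 : ∀ i, QuotientGroup.mk (v i) = (y : Fin n → Gmp p m) i :=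
          fun i => congrFun hvP i
        have hvB : v ∈ Bset p m n := hBmem y v hv1
        have : (⟨v, hvB⟩ : Bset p m n) ∈ Subtype.val ⁻¹' V := hvV
        rw [hVeq] at this
        simp only [Set.mem_preimage, Set.mem_singleton_iff, hF] at this
        refine ⟨v, hv1, fun i j => ?_⟩
        have := congrFun (congrFun this i) j
        exact congrArg Subtype.val this
    rw [hseteq]
    exact (hPopen V hVopen).preimage continuous_subtype_val
  · -- closedness
    rw [← isOpen_compl_iff]
    obtain ⟨V, hVopen, hVeq⟩ := isOpen_induced_iff.mp (hlc ({C}ᶜ))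
    have hseteq : {y : commTuples (Gmp p m) n |
        ∃ x : Fin n → (Fin m → SU p),
          (∀ i, QuotientGroup.mk (x i) = (y : Fin n → Gmp p m) i) ∧
          ∀ i j, ⁅x i, x j⁆ = (C i j : Fin m → SU p)}ᶜ = Subtype.val ⁻¹' (P '' V) := by
      ext y
      constructor
      · intro hy
        set x : Fin n → (Fin m → SU p) := fun i => ((y : Fin n → Gmp p m) i).out with hx
        have hx1 : ∀ i, QuotientGroup.mk (x i) = (y : Fin n → Gmp p m) i :=
          fun i => QuotientGroup.out_eq' _
        have hxB : x ∈ Bset p m n := hBmem y x hx1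
        refine ⟨x, ?_, funext hx1⟩
        have : (⟨x, hxB⟩ : Bset p m n) ∈ F ⁻¹' {C}ᶜ := by
          simp only [Set.mem_preimage, Set.mem_compl_iff, Set.mem_singleton_iff, hF]
          intro hc
          refine hy ⟨x, hx1, fun i j => ?_⟩
          have := congrFun (congrFun hc i) j
          exact congrArg Subtype.val this
        rw [← hVeq] at this
        exact this
      · rintro ⟨v, hvV, hvP⟩ ⟨x, hx1, hx2⟩
        have hv1 : ∀ i, QuotientGroup.mk (v i) = (y : Fin n → Gmp p m) i :=
          fun i => congrFun hvP i
        have hvB : v ∈ Bset p m n := hBmem y v hv1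
        have hmem : (⟨v, hvB⟩ : Bset p m n) ∈ Subtype.val ⁻¹' V := hvV
        rw [hVeq] at hmem
        simp only [Set.mem_preimage, Set.mem_compl_iff, Set.mem_singleton_iff, hF] at hmem
        apply hmem
        funext i j
        refine Subtype.ext ?_
        show ⁅v i, v j⁆ = (C i j : Fin m → SU p)
        have hz : ∀ i, (x i)⁻¹ * v i ∈ DeltaZp p m := by
          intro i
          rw [← QuotientGroup.eq]
          rw [hx1 i, hv1 i]
        have hvx : ∀ k, v k = x k * ((x k)⁻¹ * v k) := by
          intro k; group
        rw [hvx i, hvx j,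
          comm_mul_central (x i) (x j) _ _ (DeltaZp_comm (hz i)) (DeltaZp_comm (hz j))]
        exact hx2 i j
    rw [hseteq]
    exact (hPopen V hVopen).preimage continuous_subtype_val
end

section
/- Let x, y ∈ SU(2) satisfy [x,y] = −I. Then x⁴ = I, x² = y² = −I, and the subgroup of SU(2) generated by x and y is isomorphic to the quaternion group Q_8 of order eight. -/
namespace QuatAux

open Matrix

lemma trace_zero (X Y : Matrix (Fin 2) (Fin 2) ℂ) (hY : Y.det = 1)
    (h : X * Y = -(Y * X)) : X.trace = 0 := by
  have hYi : Y⁻¹ * Y = 1 := nonsing_inv_mul Y (by simp [hY])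
  have hYi' : Y * Y⁻¹ = 1 := mul_nonsing_inv Y (by simp [hY])
  have h2 : X.trace = -X.trace := by
    calc X.trace = ((X * Y) * Y⁻¹).trace := by rw [mul_assoc, hYi', mul_one]
      _ = (Y⁻¹ * (X * Y)).trace := trace_mul_comm _ _
      _ = -(Y⁻¹ * (Y * X)).trace := by rw [h]; simp [Matrix.mul_neg]
      _ = -X.trace := by rw [← mul_assoc, hYi, one_mul]
  exact add_self_eq_zero.mp (by linear_combination h2)

lemma sq_eq_neg_one (X : Matrix (Fin 2) (Fin 2) ℂ) (hd : X.det = 1) (ht : X.trace = 0) :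
    X * X = -1 := by
  rw [Matrix.det_fin_two] at hd
  rw [Matrix.trace_fin_two] at ht
  ext i j
  fin_cases i <;> fin_cases j <;>
    simp [Matrix.mul_apply, Fin.sum_univ_two, Matrix.one_apply] <;>
    first
      | linear_combination -hd + X 0 0 * ht
      | linear_combination X 0 1 * ht
      | linear_combination X 1 0 * ht
      | linear_combination -hd + X 1 1 * ht

lemma one_ne_neg_one : (1 : Matrix (Fin 2) (Fin 2) ℂ) ≠ -1 := by
  intro h
  have := congrFun (congrFun h 0) 0
  simp [Matrix.one_apply] at this
  norm_num at this

/-- The candidate map `Q₈ → SU 2`. -/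
noncomputable def quatFun (x y : SU 2) : QuaternionGroup 2 → SU 2
  | .a i => x ^ (i.val : ℤ)
  | .xa i => y * x ^ (i.val : ℤ)

end QuatAux

open scoped commutatorElement

/-- If `x, y ∈ SU(2)` satisfy `⁅x,y⁆ = -I`, then `x⁴ = I`, `x² = y² = -I`, and the
subgroup generated by `x` and `y` is isomorphic to the quaternion group `Q₈`. -/
theorem commutator_neg_one_gives_quaternion (x y : SU 2) (hxy : SU.mat ⁅x, y⁆ = -1) :
    x ^ 4 = 1 ∧ SU.mat (x ^ 2) = -1 ∧ SU.mat (y ^ 2) = -1 ∧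
    Nonempty ((Subgroup.closure {x, y}) ≃* QuaternionGroup 2) := by
  have mat_mul : ∀ a b : SU 2, SU.mat (a * b) = SU.mat a * SU.mat b := fun _ _ => rfl
  have mat_one : SU.mat (1 : SU 2) = 1 := rfl
  have mat_inj : Function.Injective (SU.mat (p := 2)) :=
    fun _ _ h => Subtype.ext (Subtype.ext h)
  have detX : (SU.mat x).det = 1 := x.2
  have detY : (SU.mat y).det = 1 := y.2
  -- X Y = -(Y X)
  have hXY : SU.mat x * SU.mat y = -(SU.mat y * SU.mat x) := by
    have h1 : x * y = ⁅x, y⁆ * (y * x) := by group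
    calc SU.mat x * SU.mat y = SU.mat (x * y) := rfl
      _ = SU.mat ⁅x, y⁆ * (SU.mat y * SU.mat x) := by rw [h1, mat_mul, mat_mul]
      _ = -(SU.mat y * SU.mat x) := by rw [hxy, neg_one_mul]
  have hYX : SU.mat y * SU.mat x = -(SU.mat x * SU.mat y) := by rw [hXY, neg_neg]
  have htX : (SU.mat x).trace = 0 := QuatAux.trace_zero _ _ detY hXY
  have htY : (SU.mat y).trace = 0 := QuatAux.trace_zero _ _ detX hYX
  have hX2 : SU.mat x * SU.mat x = -1 := QuatAux.sq_eq_neg_one _ detX htX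
  have hY2 : SU.mat y * SU.mat y = -1 := QuatAux.sq_eq_neg_one _ detY htY
  have hmx2 : SU.mat (x ^ 2) = -1 := by rw [pow_two, mat_mul]; exact hX2
  have hmy2 : SU.mat (y ^ 2) = -1 := by rw [pow_two, mat_mul]; exact hY2
  have hx4 : x ^ 4 = 1 := by
    apply mat_inj
    have : x ^ 4 = x ^ 2 * x ^ 2 := by group
    rw [this, mat_mul, hmx2, mat_one, neg_one_mul, neg_neg]
  have hy2x2 : y ^ 2 = x ^ 2 := mat_inj (by rw [hmx2, hmy2])
  -- x * y * x = y
  have hxyx : x * y * x = y := by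
    apply mat_inj
    rw [mat_mul, mat_mul, hXY, neg_mul, mul_assoc, hX2, mul_neg_one, neg_neg]
  -- SemiconjBy y x⁻¹ x : y * x⁻¹ = x * y
  have hsc : SemiconjBy y x⁻¹ x := by
    have h1 : (x * y * x) * x⁻¹ = x * y := by group
    rw [hxyx] at h1
    exact h1
  have hconj : ∀ k : ℤ, x ^ k * y = y * x ^ (-k) := by
    intro k
    have := hsc.zpow_right k
    unfold SemiconjBy at this
    rw [inv_zpow, ← zpow_neg] at this
    exact this.symm
  -- x ^ m depends only on m mod 4
  have key : ∀ m n : ℤ, ((m : ZMod 4) = (n : ZMod 4)) → x ^ m = x ^ n := by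
    intro m n h
    have h' : m ≡ n [ZMOD 4] := (ZMod.intCast_eq_intCast_iff _ _ _).mp h
    obtain ⟨k, hk⟩ := h'.dvd
    have hn : n = m + 4 * k := by linarith
    subst hn
    have : x ^ (m + 4 * k) = x ^ m := by
      rw [zpow_add, zpow_mul, show ((4:ℤ)) = ((4:ℕ):ℤ) by norm_num, zpow_natCast, hx4,
        one_zpow, mul_one]
    exact this.symm
  have hx2z : y * y = x ^ (2:ℤ) := by
    have h1 : y * y = y ^ 2 := (pow_two y).symm
    rw [h1, hy2x2, show ((2:ℤ)) = ((2:ℕ):ℤ) by norm_num, zpow_natCast]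
  -- the monoid hom
  set f := QuatAux.quatFun x y with hf
  have hfa : ∀ i : ZMod (2*2), f (.a i) = x ^ (i.val : ℤ) := fun _ => rfl
  have hfxa : ∀ i : ZMod (2*2), f (.xa i) = y * x ^ (i.val : ℤ) := fun _ => rfl
  have valcast : ∀ i : ZMod (2*2), ((i.val : ℤ) : ZMod 4) = i := by
    intro i
    push_cast [ZMod.natCast_val, ZMod.cast_id]
    rfl
  have hmul : ∀ g h : QuaternionGroup 2, f (g * h) = f g * f h := by
    rintro (i | i) (j | j)
    · rw [QuaternionGroup.a_mul_a, hfa, hfa, hfa, ← zpow_add]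
      exact key _ _ (by push_cast [valcast]; ring)
    · rw [QuaternionGroup.a_mul_xa, hfxa, hfa, hfxa, ← mul_assoc, hconj, mul_assoc, ← zpow_add]
      congr 1
      exact key _ _ (by push_cast [valcast]; ring)
    · rw [QuaternionGroup.xa_mul_a, hfxa, hfxa, hfa, mul_assoc, ← zpow_add]
      congr 1
      exact key _ _ (by push_cast [valcast]; ring)
    · rw [QuaternionGroup.xa_mul_xa, hfa, hfxa, hfxa]
      have hr : (y * x ^ (i.val:ℤ)) * (y * x ^ (j.val:ℤ))
          = y * (x ^ (i.val:ℤ) * y) * x ^ (j.val:ℤ) := by group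
      rw [hconj] at hr
      calc x ^ ((((2:ℕ) : ZMod (2*2)) + j - i).val : ℤ)
          = x ^ ((2 : ℤ) + (-(i.val:ℤ) + (j.val:ℤ))) := by
            exact key _ _ (by push_cast [valcast]; ring)
        _ = x ^ (2:ℤ) * (x ^ (-(i.val:ℤ)) * x ^ ((j.val:ℤ))) := by
            rw [zpow_add, zpow_add]
        _ = y * (y * x ^ (-(i.val:ℤ))) * x ^ ((j.val:ℤ)) := by
            rw [← hx2z]; group
        _ = (y * x ^ (i.val:ℤ)) * (y * x ^ (j.val:ℤ)) := hr.symm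
  set φ : QuaternionGroup 2 →* SU 2 :=
    { toFun := f, map_one' := by
        have : (1 : QuaternionGroup 2) = .a 0 := rfl
        rw [this, hfa]; norm_num
      map_mul' := hmul } with hφ
  -- x^2 ≠ 1 etc.
  have hx2ne : x ^ 2 ≠ 1 := by
    intro h
    rw [h, mat_one] at hmx2
    exact QuatAux.one_ne_neg_one hmx2
  have hxne : x ≠ 1 := by
    intro h; exact hx2ne (by rw [h, one_pow])
  -- injectivity
  have hinj : Function.Injective φ := by
    apply (injective_iff_map_eq_one φ).mpr
    rintro (i | i) hg
    · have hg' : x ^ (i.val : ℤ) = 1 := hg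
      have hv : i.val < 4 := i.val_lt
      interval_cases h : i.val
      · have : i = 0 := by
          have := valcast i
          rw [h] at this
          simpa using this.symm
        rw [this]; rfl
      · exfalso; apply hxne; simpa using hg'
      · exfalso; apply hx2ne
        have : x ^ (2:ℤ) = 1 := hg'
        simpa using this
      · exfalso; apply hxne
        have h3 : x ^ (3:ℤ) = 1 := hg'
        have h4 : x ^ (4:ℤ) = 1 := by
          rw [show ((4:ℤ)) = ((4:ℕ):ℤ) by norm_num, zpow_natCast, hx4]
        have h34 : x ^ ((3:ℤ) + 1) = x ^ (3:ℤ) * x ^ (1:ℤ) := zpow_add x 3 1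
        rw [h3, one_mul, zpow_one, show ((3:ℤ) + 1) = 4 by norm_num, h4] at h34
        exact h34.symm
    · exfalso
      have hg' : y * x ^ (i.val : ℤ) = 1 := hg
      have hy' : y = (x ^ (i.val : ℤ))⁻¹ := eq_inv_of_mul_eq_one_left hg'
      have hcomm : Commute x y := by
        rw [hy']
        exact ((Commute.refl x).zpow_right _).inv_right
      have : ⁅x, y⁆ = 1 := commutatorElement_eq_one_iff_commute.mpr hcomm
      rw [this, mat_one] at hxy
      exact QuatAux.one_ne_neg_one hxy
  -- range = closure
  have hxmem : x ∈ Subgroup.closure {x, y} :=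
    Subgroup.subset_closure (Set.mem_insert _ _)
  have hymem : y ∈ Subgroup.closure {x, y} :=
    Subgroup.subset_closure (Set.mem_insert_of_mem _ rfl)
  have hrange : φ.range = Subgroup.closure {x, y} := by
    apply le_antisymm
    · rintro _ ⟨(i | i), rfl⟩
      · exact Subgroup.zpow_mem _ hxmem _
      · exact Subgroup.mul_mem _ hymem (Subgroup.zpow_mem _ hxmem _)
    · rw [Subgroup.closure_le]
      rintro g (rfl | rfl)
      · refine ⟨.a 1, ?_⟩
        show f (.a 1) = g
        rw [hfa, show ((1 : ZMod (2*2)).val) = 1 from by decide]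
        exact zpow_one g
      · refine ⟨.xa 0, ?_⟩
        show f (.xa 0) = g
        rw [hfxa, show ((0 : ZMod (2*2)).val) = 0 from by decide]
        simp
  refine ⟨hx4, hmx2, hmy2, ⟨?_⟩⟩
  exact ((MonoidHom.ofInjective hinj).trans (MulEquiv.subgroupCongr hrange)).symm
end
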